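/- arXiv:2404.08183 — 3 statements merged into one kernel-verified Lean document; each statement's English description precedes it below -/
import Mathlib

section
/- Let n ≥ 4 and let A be a pure order ideal of monomials in s variables whose h-vector is (1, a, a, ..., a, b) of length n+1 (with n−1 middle entries all equal to a), where a and b are positive integers. Then every maximal monomial of A (with respect to divisibility) is of the form x_i^n or x_i · x_j^{n−1} for some variables x_i ≠ x_j; that is, every maximal exponent vector is either n times a standard basis vector, or the sum of one standard basis vector e_i and (n−1) times a different standard basis vector e_j. -/
/-- The degree of a monomial (exponent vector) in `s` variables. -/
def mdeg {s : ℕ} (u : Fin s → ℕ) : ℕ := ∑ i, u i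

/-- A (nonempty, finite) set of monomials is an order ideal if it is closed
under divisibility (componentwise `≤` of exponent vectors). -/
def IsOrderIdeal {s : ℕ} (A : Finset (Fin s → ℕ)) : Prop :=
  A.Nonempty ∧ ∀ u ∈ A, ∀ v : Fin s → ℕ, v ≤ u → v ∈ A

/-- `u` is a maximal element of `A` with respect to divisibility. -/
def IsMaximalIn {s : ℕ} (A : Finset (Fin s → ℕ)) (u : Fin s → ℕ) : Prop :=
  u ∈ A ∧ ∀ v ∈ A, u ≤ v → v = u

/-- An order ideal is pure if all its maximal monomials have the same degree. -/
def IsPure {s : ℕ} (A : Finset (Fin s → ℕ)) : Prop :=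
  ∀ u v : Fin s → ℕ, IsMaximalIn A u → IsMaximalIn A v → mdeg u = mdeg v

/-- The maximal degree of a monomial in `A`. -/
def topDegree {s : ℕ} (A : Finset (Fin s → ℕ)) : ℕ := A.sup mdeg

/-- The number of monomials of degree `i` in `A`. -/
def hVec {s : ℕ} (A : Finset (Fin s → ℕ)) (i : ℕ) : ℕ :=
  (A.filter (fun u => mdeg u = i)).card

/-- The h-vector `(h_0, h_1, ..., h_n)` of `A`, where `n = topDegree A`. -/
def hVector {s : ℕ} (A : Finset (Fin s → ℕ)) : List ℕ :=
  (List.range (topDegree A + 1)).map (hVec A)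

/-- A finite sequence is a pure O-sequence if it is the h-vector of some
pure order ideal of monomials. -/
def IsPureOSequence (h : List ℕ) : Prop :=
  ∃ (s : ℕ) (A : Finset (Fin s → ℕ)), IsOrderIdeal A ∧ IsPure A ∧ hVector A = h


namespace S8
open Finset
open scoped Classical

variable {s : ℕ}

abbrev en (i : Fin s) : Fin s → ℕ := Pi.single i 1

lemma mdeg_add (u v : Fin s → ℕ) : mdeg (u + v) = mdeg u + mdeg v := by
  simp [mdeg, Finset.sum_add_distrib]

lemma mdeg_single (i : Fin s) (k : ℕ) : mdeg (Pi.single i k) = k := by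
  simp [mdeg]

lemma mdeg_eq_zero {u : Fin s → ℕ} (h : mdeg u = 0) : u = 0 := by
  funext j
  have := Finset.sum_eq_zero_iff.mp h j (mem_univ j)
  simpa using this

lemma exists_split {u : Fin s → ℕ} {k : ℕ} (h : mdeg u = k + 1) :
    ∃ i v, mdeg v = k ∧ u = en i + v := by
  have hne : ∃ i, u i ≠ 0 := by
    by_contra hc
    push_neg at hc
    have : u = 0 := funext hc
    rw [this] at h; simp [mdeg] at h
  obtain ⟨i, hi⟩ := hne
  refine ⟨i, fun j => u j - (en i) j, ?_, ?_⟩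
  · have huv : u = en i + (fun j => u j - (en i) j) := by
      funext j
      simp only [Pi.add_apply, Pi.single_apply, en]
      by_cases hj : j = i <;> simp [hj] <;> omega
    have := mdeg_add (en i) (fun j => u j - (en i) j)
    rw [← huv, h] at this
    have h5 : mdeg (en i) = 1 := mdeg_single i 1
    omega
  · funext j
    simp only [Pi.add_apply, Pi.single_apply, en]
    by_cases hj : j = i <;> simp [hj] <;> omega

lemma deg1_eq {u : Fin s → ℕ} (h : mdeg u = 1) : ∃ i, u = en i := by
  obtain ⟨i, v, hv, rfl⟩ := exists_split h
  exact ⟨i, by rw [mdeg_eq_zero hv]; simp⟩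

lemma deg2_eq {u : Fin s → ℕ} (h : mdeg u = 2) : ∃ i j, u = en i + en j := by
  obtain ⟨i, v, hv, rfl⟩ := exists_split h
  obtain ⟨j, rfl⟩ := deg1_eq hv
  exact ⟨i, j, rfl⟩

lemma deg3_eq {u : Fin s → ℕ} (h : mdeg u = 3) : ∃ i j k, u = en i + en j + en k := by
  obtain ⟨i, v, hv, rfl⟩ := exists_split h
  obtain ⟨j, k, rfl⟩ := deg2_eq hv
  exact ⟨i, j, k, by ring⟩

lemma en_apply (i j : Fin s) : en i j = if j = i then 1 else 0 := Pi.single_apply ..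

lemma en_inj {i j : Fin s} (h : en i = en j) : i = j := by
  have h2 := congrFun h i
  rw [en_apply, en_apply, if_pos rfl] at h2
  by_cases hc : i = j
  · exact hc
  · rw [if_neg hc] at h2; exact absurd h2 one_ne_zero

lemma edge_eq {i j k l : Fin s} (h : en i + en j = en k + en l) :
    (i = k ∧ j = l) ∨ (i = l ∧ j = k) := by
  by_cases hik : i = k
  · subst hik
    exact Or.inl ⟨rfl, en_inj (add_left_cancel h)⟩
  · have hi := congrFun h i
    simp only [Pi.add_apply, en_apply, if_pos rfl] at hi
    have hil : i = l := by
      by_contra hil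
      rw [if_neg hik, if_neg hil] at hi
      split_ifs at hi <;> simp_all
    subst hil
    refine Or.inr ⟨rfl, ?_⟩
    have h2 : en i + en j = en i + en k := by rw [h]; ring
    exact en_inj (add_left_cancel h2)

lemma en_le {u : Fin s → ℕ} (i : Fin s) (hi : 1 ≤ u i) : en i ≤ u := by
  intro l
  rw [en_apply]
  by_cases hl : l = i
  · rw [if_pos hl, hl]; exact hi
  · rw [if_neg hl]; exact Nat.zero_le _

lemma le_of_two {u : Fin s → ℕ} (i j : Fin s) (hi : 1 ≤ u i) (hj : 1 ≤ u j) (hij : i ≠ j) :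
    en i + en j ≤ u := by
  intro l
  simp only [Pi.add_apply, en_apply]
  by_cases hl : l = i
  · subst hl
    rw [if_pos rfl, if_neg hij]; simpa using hi
  · rw [if_neg hl, Nat.zero_add]
    by_cases hl' : l = j
    · subst hl'; rw [if_pos rfl]; exact hj
    · rw [if_neg hl']; exact Nat.zero_le _

lemma le_of_loop {u : Fin s → ℕ} (i : Fin s) (hi : 2 ≤ u i) : en i + en i ≤ u := by
  intro l
  simp only [Pi.add_apply, en_apply]
  by_cases hl : l = i
  · subst hl; rw [if_pos rfl]; exact hi
  · rw [if_neg hl]; exact Nat.zero_le _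

lemma le_of_triple {u : Fin s → ℕ} (i j k : Fin s) (hi : 1 ≤ u i) (hj : 1 ≤ u j) (hk : 1 ≤ u k)
    (hij : i ≠ j) (hik : i ≠ k) (hjk : j ≠ k) : en i + en j + en k ≤ u := by
  intro l
  simp only [Pi.add_apply, en_apply]
  by_cases h1 : l = i
  · subst h1; rw [if_pos rfl, if_neg hij, if_neg hik]; simpa using hi
  · rw [if_neg h1, Nat.zero_add]
    by_cases h2 : l = j
    · subst h2; rw [if_pos rfl, if_neg hjk]; simpa using hj
    · rw [if_neg h2, Nat.zero_add]
      by_cases h3 : l = k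
      · subst h3; rw [if_pos rfl]; exact hk
      · rw [if_neg h3]; exact Nat.zero_le _

lemma edge_supp {i j l : Fin s} : (en i + en j) l ≠ 0 ↔ l = i ∨ l = j := by
  simp only [Pi.add_apply, en_apply]
  by_cases hl : l = i <;> by_cases hl' : l = j <;> simp [hl, hl']

lemma loop_supp {i l : Fin s} : (en i + en i) l ≠ 0 ↔ l = i := by
  rw [edge_supp]; tauto

lemma triple_indicator {p q w : Fin s} (hpq : p ≠ q) (hpw : p ≠ w) (hqw : q ≠ w) (l : Fin s) :
    (en p + en q + en w) l = if l = p ∨ l = q ∨ l = w then 1 else 0 := by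
  simp only [Pi.add_apply, en_apply]
  by_cases h1 : l = p <;> by_cases h2 : l = q <;> by_cases h3 : l = w <;>
    simp_all

lemma triple_supp {p q w l : Fin s} : (en p + en q + en w) l ≠ 0 ↔ l = p ∨ l = q ∨ l = w := by
  simp only [Pi.add_apply, en_apply]
  by_cases h1 : l = p <;> by_cases h2 : l = q <;> by_cases h3 : l = w <;> simp_all

lemma triple_eq_of_sets {p q w p' q' w' : Fin s}
    (hpq : p ≠ q) (hpw : p ≠ w) (hqw : q ≠ w)
    (hpq' : p' ≠ q') (hpw' : p' ≠ w') (hqw' : q' ≠ w')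
    (hs : ∀ l : Fin s, (l = p ∨ l = q ∨ l = w) ↔ (l = p' ∨ l = q' ∨ l = w')) :
    en p + en q + en w = en p' + en q' + en w' := by
  funext l
  rw [triple_indicator hpq hpw hqw, triple_indicator hpq' hpw' hqw']
  by_cases h : l = p ∨ l = q ∨ l = w
  · rw [if_pos h, if_pos ((hs l).mp h)]
  · rw [if_neg h, if_neg (fun hc => h ((hs l).mpr hc))]

lemma deg3_classify {u : Fin s → ℕ} (h : mdeg u = 3) :
    (∃ p q, u = en p + en p + en q) ∨
    (∃ p q w, p ≠ q ∧ p ≠ w ∧ q ≠ w ∧ u = en p + en q + en w) := by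
  obtain ⟨i, j, k, rfl⟩ := deg3_eq h
  by_cases hij : i = j
  · subst hij; exact Or.inl ⟨i, k, rfl⟩
  by_cases hik : i = k
  · subst hik; exact Or.inl ⟨i, j, by ring⟩
  by_cases hjk : j = k
  · subst hjk; exact Or.inl ⟨j, i, by ring⟩
  · exact Or.inr ⟨i, j, k, hij, hik, hjk, rfl⟩

section Graph
variable (A : Finset (Fin s → ℕ))

def G : SimpleGraph (Fin s) where
  Adj i j := i ≠ j ∧ en i + en j ∈ A
  symm := ⟨fun i j ⟨h1, h2⟩ => ⟨h1.symm, by rwa [add_comm] at h2⟩⟩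
  loopless := ⟨fun i h => h.1 rfl⟩

noncomputable def rp (i : Fin s) : Fin s :=
  if h : (univ.filter (fun j => en j ∈ A ∧ (G A).Reachable i j)).Nonempty
  then (univ.filter (fun j => en j ∈ A ∧ (G A).Reachable i j)).min' h else i

noncomputable def crep (u : Fin s → ℕ) : WithTop (Fin s) :=
  ((univ.filter (fun i => u i ≠ 0)).min).map (rp A)

variable {A}

lemma adj_iff {i j : Fin s} : (G A).Adj i j ↔ i ≠ j ∧ en i + en j ∈ A := Iff.rfl

lemma rp_spec {i : Fin s} (hi : en i ∈ A) :
    en (rp A i) ∈ A ∧ (G A).Reachable i (rp A i) := by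
  have hne : (univ.filter (fun j => en j ∈ A ∧ (G A).Reachable i j)).Nonempty :=
    ⟨i, by simp only [mem_filter, mem_univ, true_and]; exact ⟨hi, .refl i⟩⟩
  rw [rp, dif_pos hne]
  have := Finset.min'_mem _ hne
  simpa using this

lemma rp_eq_of_reachable {i j : Fin s} (hi : en i ∈ A) (hj : en j ∈ A)
    (hr : (G A).Reachable i j) : rp A i = rp A j := by
  have hset : (univ.filter (fun k => en k ∈ A ∧ (G A).Reachable i k)) =
      (univ.filter (fun k => en k ∈ A ∧ (G A).Reachable j k)) := by
    ext k
    simp only [mem_filter, mem_univ, true_and]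
    exact ⟨fun ⟨h1, h2⟩ => ⟨h1, hr.symm.trans h2⟩, fun ⟨h1, h2⟩ => ⟨h1, hr.trans h2⟩⟩
  have hne : (univ.filter (fun k => en k ∈ A ∧ (G A).Reachable i k)).Nonempty :=
    ⟨i, by simp only [mem_filter, mem_univ, true_and]; exact ⟨hi, .refl i⟩⟩
  have hne' : (univ.filter (fun k => en k ∈ A ∧ (G A).Reachable j k)).Nonempty :=
    ⟨j, by simp only [mem_filter, mem_univ, true_and]; exact ⟨hj, .refl j⟩⟩
  rw [rp, rp, dif_pos hne, dif_pos hne']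
  congr 1

lemma rp_idem {i : Fin s} (hi : en i ∈ A) : rp A (rp A i) = rp A i :=
  (rp_eq_of_reachable hi (rp_spec hi).1 (rp_spec hi).2).symm

lemma reachable_of_rp_eq {i j : Fin s} (hi : en i ∈ A) (hj : en j ∈ A)
    (h : rp A i = rp A j) : (G A).Reachable i j :=
  (rp_spec hi).2.trans (h ▸ (rp_spec hj).2).symm

lemma crep_eq_coe {u : Fin s → ℕ} {c : Fin s} {i₀ : Fin s} (hne : u i₀ ≠ 0)
    (hall : ∀ j, u j ≠ 0 → rp A j = c) : crep A u = ↑c := by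
  have hF : (univ.filter (fun i => u i ≠ 0)).Nonempty := ⟨i₀, by simp [hne]⟩
  rw [crep, ← Finset.coe_min' hF, WithTop.map_coe]
  have := Finset.min'_mem _ hF
  rw [mem_filter] at this
  rw [hall _ this.2]

lemma adj_dist_le {x₀ b c : Fin s} (hadj : (G A).Adj b c) (hr : (G A).Reachable x₀ b) :
    (G A).dist x₀ c ≤ (G A).dist x₀ b + 1 := by
  obtain ⟨p, hp⟩ := hr.exists_walk_length_eq_dist
  have h2 := SimpleGraph.dist_le (p.concat hadj)
  rwa [SimpleGraph.Walk.length_concat, hp] at h2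

lemma exists_step {x₀ y : Fin s} (hr : (G A).Reachable x₀ y) (hne : y ≠ x₀) :
    ∃ z, (G A).Adj z y ∧ (G A).dist x₀ z + 1 = (G A).dist x₀ y := by
  obtain ⟨p, hp⟩ := hr.exists_walk_length_eq_dist
  obtain ⟨z, hadj, q, hq⟩ := (p.reverse).exists_eq_cons_of_ne hne
  have hlen : p.reverse.length = p.length := SimpleGraph.Walk.length_reverse p
  have hlq : q.length + 1 = (G A).dist x₀ y := by
    have h3 := congrArg SimpleGraph.Walk.length hq
    rw [hlen, SimpleGraph.Walk.length_cons, hp] at h3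
    omega
  have hrz : (G A).Reachable x₀ z := ⟨q.reverse⟩
  have hz1 : (G A).dist x₀ z ≤ q.length := by
    have h4 := SimpleGraph.dist_le q.reverse
    rwa [SimpleGraph.Walk.length_reverse] at h4
  have hz2 : (G A).dist x₀ y ≤ (G A).dist x₀ z + 1 := adj_dist_le hadj.symm hrz
  exact ⟨z, hadj.symm, by omega⟩

variable (A)

/-- vertex set of the class of `x₀` -/
noncomputable def CV (x₀ : Fin s) : Finset (Fin s) :=
  univ.filter (fun j => en j ∈ A ∧ rp A j = rp A x₀)

/-- edges of the class of `x₀` -/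
noncomputable def CE (x₀ : Fin s) : Finset (Fin s → ℕ) :=
  (A.filter (fun u => mdeg u = 2)).filter (fun u => crep A u = ↑(rp A x₀))

/-- triples of the class of `x₀` -/
noncomputable def CT (x₀ : Fin s) : Finset (Fin s → ℕ) :=
  (A.filter (fun u => mdeg u = 3)).filter (fun u => crep A u = ↑(rp A x₀))

/-- loops of the class of `x₀` -/
noncomputable def CL (x₀ : Fin s) : Finset (Fin s → ℕ) :=
  (CE A x₀).filter (fun u => ∃ i, u = en i + en i)

noncomputable def ch (x₀ y : Fin s) : Fin s :=
  if h : ∃ z, (G A).Adj z y ∧ (G A).dist x₀ z + 1 = (G A).dist x₀ y then h.choose else y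

noncomputable def phi (x₀ y : Fin s) : Fin s → ℕ := en (ch A x₀ y) + en y

variable {A}

lemma ch_spec {x₀ y : Fin s} (hr : (G A).Reachable x₀ y) (hne : y ≠ x₀) :
    (G A).Adj (ch A x₀ y) y ∧ (G A).dist x₀ (ch A x₀ y) + 1 = (G A).dist x₀ y := by
  have h := exists_step hr hne
  rw [ch, dif_pos h]
  exact h.choose_spec

section Class

variable (hdc : ∀ u ∈ A, ∀ v, v ≤ u → v ∈ A) {x₀ : Fin s} (hx₀ : en x₀ ∈ A)

include hdc in
lemma supp_mem {u : Fin s → ℕ} (hu : u ∈ A) {i : Fin s} (hi : u i ≠ 0) : en i ∈ A :=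
  hdc u hu _ (en_le i (Nat.one_le_iff_ne_zero.mpr hi))

include hdc in
lemma supp_rp_eq {u : Fin s → ℕ} (hu : u ∈ A) {i j : Fin s} (hi : u i ≠ 0) (hj : u j ≠ 0) :
    rp A i = rp A j := by
  by_cases hij : i = j
  · rw [hij]
  · have hedge : en i + en j ∈ A :=
      hdc u hu _ (le_of_two i j (Nat.one_le_iff_ne_zero.mpr hi) (Nat.one_le_iff_ne_zero.mpr hj) hij)
    exact rp_eq_of_reachable (supp_mem hdc hu hi) (supp_mem hdc hu hj)
      (SimpleGraph.Adj.reachable ⟨hij, hedge⟩)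

include hdc in
lemma mem_CE_intro {u : Fin s → ℕ} (hu : u ∈ A) (hd : mdeg u = 2) {i₀ : Fin s}
    (hi₀ : u i₀ ≠ 0) (hr : rp A i₀ = rp A x₀) : u ∈ CE A x₀ := by
  rw [CE, mem_filter, mem_filter]
  exact ⟨⟨hu, hd⟩, crep_eq_coe hi₀ (fun j hj => (supp_rp_eq hdc hu hj hi₀).trans hr)⟩

include hdc in
lemma mem_CE_elim {u : Fin s → ℕ} (hu : u ∈ CE A x₀) :
    u ∈ A ∧ mdeg u = 2 ∧ ∀ j, u j ≠ 0 → rp A j = rp A x₀ := by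
  rw [CE, mem_filter, mem_filter] at hu
  obtain ⟨⟨huA, hd⟩, hc⟩ := hu
  refine ⟨huA, hd, fun j hj => ?_⟩
  have hcrep : crep A u = ↑(rp A j) :=
    crep_eq_coe hj (fun l hl => supp_rp_eq hdc huA hl hj)
  rw [hcrep] at hc
  exact_mod_cast hc

include hdc in
lemma mem_CT_elim {u : Fin s → ℕ} (hu : u ∈ CT A x₀) :
    u ∈ A ∧ mdeg u = 3 ∧ ∀ j, u j ≠ 0 → rp A j = rp A x₀ := by
  rw [CT, mem_filter, mem_filter] at hu
  obtain ⟨⟨huA, hd⟩, hc⟩ := hu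
  refine ⟨huA, hd, fun j hj => ?_⟩
  have hcrep : crep A u = ↑(rp A j) :=
    crep_eq_coe hj (fun l hl => supp_rp_eq hdc huA hl hj)
  rw [hcrep] at hc
  exact_mod_cast hc

include hdc in
lemma mem_CT_intro {u : Fin s → ℕ} (hu : u ∈ A) (hd : mdeg u = 3) {i₀ : Fin s}
    (hi₀ : u i₀ ≠ 0) (hr : rp A i₀ = rp A x₀) : u ∈ CT A x₀ := by
  rw [CT, mem_filter, mem_filter]
  exact ⟨⟨hu, hd⟩, crep_eq_coe hi₀ (fun j hj => (supp_rp_eq hdc hu hj hi₀).trans hr)⟩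

lemma mem_CV_iff {j : Fin s} : j ∈ CV A x₀ ↔ en j ∈ A ∧ rp A j = rp A x₀ := by
  rw [CV, mem_filter]; simp

include hx₀ in
lemma reach_of_mem_CV {j : Fin s} (hj : j ∈ CV A x₀) : (G A).Reachable x₀ j := by
  rw [mem_CV_iff] at hj
  exact reachable_of_rp_eq hx₀ hj.1 hj.2.symm

include hx₀ in
lemma x₀_mem_CV : x₀ ∈ CV A x₀ := mem_CV_iff.mpr ⟨hx₀, rfl⟩


include hdc hx₀ in
lemma phi_props {y : Fin s} (hy : y ∈ CV A x₀) (hne : y ≠ x₀) :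
    phi A x₀ y ∈ CE A x₀ ∧ (ch A x₀ y) ≠ y ∧
    (G A).dist x₀ (ch A x₀ y) + 1 = (G A).dist x₀ y := by
  have hr := reach_of_mem_CV hx₀ hy
  obtain ⟨hadj, hd⟩ := ch_spec hr hne
  have hzy : (ch A x₀ y) ≠ y := hadj.ne
  have hedge : en (ch A x₀ y) + en y ∈ A := hadj.2
  have hyne : (en (ch A x₀ y) + en y) y ≠ 0 := edge_supp.mpr (Or.inr rfl)
  exact ⟨mem_CE_intro hdc hedge
      (by rw [phi, mdeg_add, mdeg_single, mdeg_single]) hyne (mem_CV_iff.mp hy).2, hzy, hd⟩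

include hdc hx₀ in
lemma mem_S1_elim {m : Fin s → ℕ}
    (hm : m ∈ ((CV A x₀).erase x₀).image (phi A x₀)) :
    ∃ y z : Fin s, m = en z + en y ∧ z ≠ y ∧
      (G A).dist x₀ z + 1 = (G A).dist x₀ y := by
  rw [mem_image] at hm
  obtain ⟨y, hy, rfl⟩ := hm
  rw [mem_erase] at hy
  obtain ⟨h1, h2, h3⟩ := phi_props hdc hx₀ hy.2 hy.1
  exact ⟨y, ch A x₀ y, rfl, h2, h3⟩

include hdc hx₀ in
lemma S1_card :
    (((CV A x₀).erase x₀).image (phi A x₀)).card = (CV A x₀).card - 1 := by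
  rw [card_image_of_injOn, card_erase_of_mem (x₀_mem_CV hx₀)]
  intro y hy y' hy' heq
  rw [Finset.coe_erase, Set.mem_diff] at hy hy'
  obtain ⟨_, _, hdy⟩ := phi_props hdc hx₀ hy.1 hy.2
  obtain ⟨_, _, hdy'⟩ := phi_props hdc hx₀ hy'.1 hy'.2
  rw [phi, phi] at heq
  rcases edge_eq heq with ⟨hc1, hc2⟩ | ⟨hc1, hc2⟩
  · exact hc2
  · have e1 : (G A).dist x₀ y' + 1 = (G A).dist x₀ y := by rw [← hc1]; exact hdy
    have e2 : (G A).dist x₀ y + 1 = (G A).dist x₀ y' := by rw [hc2]; exact hdy'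
    omega

include hdc hx₀ in
lemma horiz_not_S1 {α β : Fin s}
    (hd : (G A).dist x₀ α = (G A).dist x₀ β) :
    en α + en β ∉ ((CV A x₀).erase x₀).image (phi A x₀) := by
  intro hmem
  obtain ⟨y, z, heq, hzy, hdz⟩ := mem_S1_elim hdc hx₀ hmem
  rcases edge_eq heq with ⟨hc1, hc2⟩ | ⟨hc1, hc2⟩
  · rw [← hc1, ← hc2, hd] at hdz; omega
  · rw [← hc1, ← hc2, hd] at hdz; omega

include hdc hx₀ in
lemma CLS1 : (CV A x₀).card + (CL A x₀).card ≤ (CE A x₀).card + 1 := by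
  set S1 := ((CV A x₀).erase x₀).image (phi A x₀) with hS1
  have hS1sub : S1 ⊆ CE A x₀ := by
    intro m hm
    rw [hS1, mem_image] at hm
    obtain ⟨y, hy, rfl⟩ := hm
    rw [mem_erase] at hy
    exact (phi_props hdc hx₀ hy.2 hy.1).1
  have hCLsub : CL A x₀ ⊆ CE A x₀ := filter_subset _ _
  have hdisj : Disjoint S1 (CL A x₀) := by
    rw [Finset.disjoint_left]
    intro m hm hmL
    obtain ⟨y, z, heq, hzy, _⟩ := mem_S1_elim hdc hx₀ hm
    rw [CL, mem_filter] at hmL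
    obtain ⟨_, i, hi⟩ := hmL
    rw [hi] at heq
    rcases edge_eq heq with ⟨hc1, hc2⟩ | ⟨hc1, hc2⟩ <;> first | exact hzy (hc1.symm.trans hc2) | exact hzy (hc1.trans hc2.symm) | exact hzy (hc2.symm.trans hc1) | exact hzy (hc2.trans hc1.symm)
  have hunion : S1 ∪ CL A x₀ ⊆ CE A x₀ := union_subset hS1sub hCLsub
  have hcard := card_le_card hunion
  rw [card_union_of_disjoint hdisj, S1_card hdc hx₀] at hcard
  have hpos : 1 ≤ (CV A x₀).card := card_pos.mpr ⟨x₀, x₀_mem_CV hx₀⟩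
  omega

include hdc hx₀ in
lemma CLS2 {q w : Fin s} (hq : (G A).Adj x₀ q) (hw : (G A).Adj x₀ w)
    (hqw : (G A).Adj q w) :
    (CV A x₀).card + (CL A x₀).card ≤ (CE A x₀).card := by
  set S1 := ((CV A x₀).erase x₀).image (phi A x₀) with hS1
  have hS1sub : S1 ⊆ CE A x₀ := by
    intro m hm
    rw [hS1, mem_image] at hm
    obtain ⟨y, hy, rfl⟩ := hm
    rw [mem_erase] at hy
    exact (phi_props hdc hx₀ hy.2 hy.1).1
  have hCLsub : CL A x₀ ⊆ CE A x₀ := filter_subset _ _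
  have henq : en q ∈ A := supp_mem hdc hq.2 (edge_supp.mpr (Or.inr rfl))
  have hdq : (G A).dist x₀ q = 1 := SimpleGraph.dist_eq_one_iff_adj.mpr hq
  have hdw : (G A).dist x₀ w = 1 := SimpleGraph.dist_eq_one_iff_adj.mpr hw
  have hm1CE : en q + en w ∈ CE A x₀ := by
    refine mem_CE_intro hdc hqw.2 (by rw [mdeg_add, mdeg_single, mdeg_single])
      (edge_supp.mpr (Or.inl rfl)) ?_
    exact (rp_eq_of_reachable hx₀ henq hq.reachable).symm
  have hm1S1 : en q + en w ∉ S1 := horiz_not_S1 hdc hx₀ (by rw [hdq, hdw])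
  have hm1CL : en q + en w ∉ CL A x₀ := by
    intro hmem
    rw [CL, mem_filter] at hmem
    obtain ⟨_, i, hi⟩ := hmem
    rcases edge_eq hi with ⟨hc1, hc2⟩ | ⟨hc1, hc2⟩ <;> exact hqw.ne (hc1.trans hc2.symm)
  have hdisj : Disjoint S1 (CL A x₀) := by
    rw [Finset.disjoint_left]
    intro m hm hmL
    obtain ⟨y, z, heq, hzy, _⟩ := mem_S1_elim hdc hx₀ hm
    rw [CL, mem_filter] at hmL
    obtain ⟨_, i, hi⟩ := hmL
    rw [hi] at heq
    rcases edge_eq heq with ⟨hc1, hc2⟩ | ⟨hc1, hc2⟩ <;> first | exact hzy (hc1.symm.trans hc2) | exact hzy (hc1.trans hc2.symm) | exact hzy (hc2.symm.trans hc1) | exact hzy (hc2.trans hc1.symm)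
  have hins : insert (en q + en w) (S1 ∪ CL A x₀) ⊆ CE A x₀ := by
    rw [insert_subset_iff]
    exact ⟨hm1CE, union_subset hS1sub hCLsub⟩
  have hcard := card_le_card hins
  rw [card_insert_of_notMem (by
      rw [mem_union]; rintro (h | h); exacts [hm1S1 h, hm1CL h]),
    card_union_of_disjoint hdisj, S1_card hdc hx₀] at hcard
  have hpos : 1 ≤ (CV A x₀).card := card_pos.mpr ⟨x₀, x₀_mem_CV hx₀⟩
  omega

include hdc hx₀ in
lemma mem_S1_elim' {m : Fin s → ℕ}
    (hm : m ∈ ((CV A x₀).erase x₀).image (phi A x₀)) :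
    ∃ y : Fin s, m = en (ch A x₀ y) + en y ∧ (ch A x₀ y) ≠ y ∧
      (G A).dist x₀ (ch A x₀ y) + 1 = (G A).dist x₀ y := by
  rw [mem_image] at hm
  obtain ⟨y, hy, rfl⟩ := hm
  rw [mem_erase] at hy
  obtain ⟨h1, h2, h3⟩ := phi_props hdc hx₀ hy.2 hy.1
  exact ⟨y, rfl, h2, h3⟩

include hdc hx₀ in
lemma CLS3aux {q w α β γ : Fin s}
    (hq : (G A).Adj x₀ q) (hw : (G A).Adj x₀ w) (hqw : (G A).Adj q w)
    (hαβ : (G A).Adj α β) (hαγ : (G A).Adj α γ) (hβγ : (G A).Adj β γ)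
    (hγV : γ ∈ CV A x₀)
    (hd : (G A).dist x₀ α = (G A).dist x₀ β)
    (hneq : ¬ ∀ l : Fin s, (l = α ∨ l = β ∨ l = γ) ↔ (l = x₀ ∨ l = q ∨ l = w)) :
    (CV A x₀).card + 1 ≤ (CE A x₀).card := by
  set S1 := ((CV A x₀).erase x₀).image (phi A x₀) with hS1
  have hS1sub : S1 ⊆ CE A x₀ := by
    intro m hm
    rw [hS1, mem_image] at hm
    obtain ⟨y, hy, rfl⟩ := hm
    rw [mem_erase] at hy
    exact (phi_props hdc hx₀ hy.2 hy.1).1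
  have henq : en q ∈ A := supp_mem hdc hq.2 (edge_supp.mpr (Or.inr rfl))
  have hrpq : rp A q = rp A x₀ := (rp_eq_of_reachable hx₀ henq hq.reachable).symm
  have hdq : (G A).dist x₀ q = 1 := SimpleGraph.dist_eq_one_iff_adj.mpr hq
  have hdw : (G A).dist x₀ w = 1 := SimpleGraph.dist_eq_one_iff_adj.mpr hw
  have hm1CE : en q + en w ∈ CE A x₀ := by
    refine mem_CE_intro hdc hqw.2 (by rw [mdeg_add, mdeg_single, mdeg_single])
      (edge_supp.mpr (Or.inl rfl)) hrpq
  have hm1S1 : en q + en w ∉ S1 := horiz_not_S1 hdc hx₀ (by rw [hdq, hdw])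
  have FIN : ∀ m2 : Fin s → ℕ, m2 ∈ CE A x₀ → m2 ∉ S1 → m2 ≠ en q + en w →
      (CV A x₀).card + 1 ≤ (CE A x₀).card := by
    intro m2 h1 h2 h3
    have hins : insert m2 (insert (en q + en w) S1) ⊆ CE A x₀ := by
      rw [insert_subset_iff, insert_subset_iff]
      exact ⟨h1, hm1CE, hS1sub⟩
    have hcard := card_le_card hins
    rw [card_insert_of_notMem (by
        rw [mem_insert]; rintro (h | h); exacts [h3 h, h2 h]),
      card_insert_of_notMem hm1S1, S1_card hdc hx₀] at hcard
    have hpos : 1 ≤ (CV A x₀).card := card_pos.mpr ⟨x₀, x₀_mem_CV hx₀⟩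
    omega
  by_cases hpair : (α = q ∧ β = w) ∨ (α = w ∧ β = q)
  · -- second triangle is {q, w, γ}
    have hγadj : (G A).Adj q γ ∧ (G A).Adj w γ := by
      rcases hpair with ⟨h1, h2⟩ | ⟨h1, h2⟩
      · exact ⟨h1 ▸ hαγ, h2 ▸ hβγ⟩
      · exact ⟨h2 ▸ hβγ, h1 ▸ hαγ⟩
    have hγq : γ ≠ q := hγadj.1.ne'
    have hγw : γ ≠ w := hγadj.2.ne'
    have hγx : γ ≠ x₀ := by
      intro hγ
      apply hneq
      rcases hpair with ⟨h1, h2⟩ | ⟨h1, h2⟩ <;> subst h1 <;> subst h2 <;> subst hγ <;>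
        intro l <;> tauto
    have hreachγ : (G A).Reachable x₀ γ := reach_of_mem_CV hx₀ hγV
    have hdγpos : 1 ≤ (G A).dist x₀ γ := hreachγ.pos_dist_of_ne (Ne.symm hγx)
    have hdγle : (G A).dist x₀ γ ≤ 2 := by
      have h5 := adj_dist_le hγadj.1 hq.reachable
      rw [hdq] at h5; exact h5
    by_cases hdγ : (G A).dist x₀ γ = 1
    · -- horizontal edge γ q
      refine FIN (en γ + en q) ?_ ?_ ?_
      · exact mem_CE_intro hdc hγadj.1.symm.2 (by rw [mdeg_add, mdeg_single, mdeg_single])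
          (edge_supp.mpr (Or.inr rfl)) hrpq
      · exact horiz_not_S1 hdc hx₀ (by rw [hdγ, hdq])
      · intro hc
        rcases edge_eq hc with ⟨hc1, hc2⟩ | ⟨hc1, hc2⟩
        · exact hγq hc1
        · exact hγw hc1
    · have hdγ2 : (G A).dist x₀ γ = 2 := by omega
      have hqγA : en q + en γ ∈ A := hγadj.1.2
      have hwγA : en w + en γ ∈ A := hγadj.2.2
      have hqγCE : en q + en γ ∈ CE A x₀ :=
        mem_CE_intro hdc hqγA (by rw [mdeg_add, mdeg_single, mdeg_single])
          (edge_supp.mpr (Or.inl rfl)) hrpq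
      have henw : en w ∈ A := supp_mem hdc hw.2 (edge_supp.mpr (Or.inr rfl))
      have hrpw : rp A w = rp A x₀ := (rp_eq_of_reachable hx₀ henw hw.reachable).symm
      have hwγCE : en w + en γ ∈ CE A x₀ :=
        mem_CE_intro hdc hwγA (by rw [mdeg_add, mdeg_single, mdeg_single])
          (edge_supp.mpr (Or.inl rfl)) hrpw
      by_cases he1 : en q + en γ ∈ S1
      · -- then ch γ = q, so en w + en γ ∉ S1
        obtain ⟨y, heq, hzy, hdz⟩ := mem_S1_elim' hdc hx₀ he1
        have hchq : ch A x₀ γ = q := by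
          rcases edge_eq heq with ⟨hc1, hc2⟩ | ⟨hc1, hc2⟩
          · rw [← hc2] at hc1; exact hc1.symm
          · exfalso
            rw [← hc2, ← hc1, hdq, hdγ2] at hdz
            omega
        refine FIN (en w + en γ) hwγCE ?_ ?_
        · intro he2
          obtain ⟨y2, heq2, hzy2, hdz2⟩ := mem_S1_elim' hdc hx₀ he2
          rcases edge_eq heq2 with ⟨hc1, hc2⟩ | ⟨hc1, hc2⟩
          · rw [← hc2] at hc1
            rw [← hc1] at hchq
            exact hqw.ne hchq.symm
          · rw [← hc2, ← hc1, hdw, hdγ2] at hdz2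
            omega
        · intro hc
          rcases edge_eq hc with ⟨hc1, hc2⟩ | ⟨hc1, hc2⟩
          · exact hγw hc2
          · exact hγq hc2.symm.symm
      · refine FIN (en q + en γ) hqγCE he1 ?_
        intro hc
        rcases edge_eq hc with ⟨hc1, hc2⟩ | ⟨hc1, hc2⟩
        · exact hγw hc2
        · exact hγq hc2
  · -- the horizontal edge α β is distinct from q w
    refine FIN (en α + en β) ?_ ?_ ?_
    · refine mem_CE_intro hdc hαβ.2 (by rw [mdeg_add, mdeg_single, mdeg_single])
        (edge_supp.mpr (Or.inr rfl)) ?_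
      have henβ : en β ∈ A := supp_mem hdc hαβ.2 (edge_supp.mpr (Or.inr rfl))
      have henγ : en γ ∈ A := (mem_CV_iff.mp hγV).1
      have hrβγ : (G A).Reachable γ β := hβγ.symm.reachable
      rw [rp_eq_of_reachable henβ henγ hrβγ.symm]
      exact (mem_CV_iff.mp hγV).2
    · exact horiz_not_S1 hdc hx₀ hd
    · intro hc
      apply hpair
      rcases edge_eq hc with ⟨hc1, hc2⟩ | ⟨hc1, hc2⟩
      · exact Or.inl ⟨hc1, hc2⟩
      · exact Or.inr ⟨hc1, hc2⟩

set_option maxHeartbeats 1000000 in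
include hdc hx₀ in
lemma CLS3 {q w p' q' w' : Fin s}
    (hq : (G A).Adj x₀ q) (hw : (G A).Adj x₀ w) (hqw : (G A).Adj q w)
    (h1 : (G A).Adj p' q') (h2 : (G A).Adj p' w') (h3 : (G A).Adj q' w')
    (hp'V : p' ∈ CV A x₀) (hq'V : q' ∈ CV A x₀) (hw'V : w' ∈ CV A x₀)
    (hneq : ¬ ∀ l : Fin s, (l = p' ∨ l = q' ∨ l = w') ↔ (l = x₀ ∨ l = q ∨ l = w)) :
    (CV A x₀).card + 1 ≤ (CE A x₀).card := by
  have hrp' := reach_of_mem_CV hx₀ hp'V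
  have hrq' := reach_of_mem_CV hx₀ hq'V
  have hrw' := reach_of_mem_CV hx₀ hw'V
  have d1 : (G A).dist x₀ q' ≤ (G A).dist x₀ p' + 1 := adj_dist_le h1 hrp'
  have d2 : (G A).dist x₀ p' ≤ (G A).dist x₀ q' + 1 := adj_dist_le h1.symm hrq'
  have d3 : (G A).dist x₀ w' ≤ (G A).dist x₀ p' + 1 := adj_dist_le h2 hrp'
  have d4 : (G A).dist x₀ p' ≤ (G A).dist x₀ w' + 1 := adj_dist_le h2.symm hrw'
  have d5 : (G A).dist x₀ w' ≤ (G A).dist x₀ q' + 1 := adj_dist_le h3 hrq'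
  have d6 : (G A).dist x₀ q' ≤ (G A).dist x₀ w' + 1 := adj_dist_le h3.symm hrw'
  have hpar : (G A).dist x₀ p' = (G A).dist x₀ q' ∨ (G A).dist x₀ p' = (G A).dist x₀ w' ∨
      (G A).dist x₀ q' = (G A).dist x₀ w' := by
    by_contra hcon
    push_neg at hcon
    obtain ⟨e1, e2, e3⟩ := hcon
    omega
  rcases hpar with hd | hd | hd
  · exact CLS3aux hdc hx₀ hq hw hqw h1 h2 h3 hw'V hd hneq
  · refine CLS3aux hdc hx₀ hq hw hqw h2 h1 h3.symm hq'V hd ?_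
    intro hall; apply hneq; intro l
    have := hall l; tauto
  · refine CLS3aux hdc hx₀ hq hw hqw h3 h1.symm h2.symm hp'V hd ?_
    intro hall; apply hneq; intro l
    have := hall l; tauto

include hdc hx₀ in
lemma loop_mem_CL {i : Fin s} (hloop : en i + en i ∈ A) (hrpi : rp A i = rp A x₀) :
    en i + en i ∈ CL A x₀ := by
  rw [CL, mem_filter]
  refine ⟨mem_CE_intro hdc hloop (by rw [mdeg_add, mdeg_single])
    (loop_supp.mpr rfl) hrpi, i, rfl⟩

include hdc hx₀ in
lemma NONEMP (hext : ∀ u ∈ A, (mdeg u = 1 ∨ mdeg u = 2) → ∃ i, u + en i ∈ A) :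
    (CV A x₀).card ≤ (CE A x₀).card := by
  have hloopcase : ∀ i : Fin s, en i + en i ∈ A → rp A i = rp A x₀ →
      (CV A x₀).card ≤ (CE A x₀).card := by
    intro i hloop hrpi
    have hCL : 1 ≤ (CL A x₀).card := card_pos.mpr ⟨_, loop_mem_CL hdc hx₀ hloop hrpi⟩
    have := CLS1 hdc hx₀
    omega
  obtain ⟨i, hi⟩ := hext (en x₀) hx₀ (Or.inl (mdeg_single x₀ 1))
  by_cases hix : i = x₀
  · rw [hix] at hi
    exact hloopcase x₀ hi rfl
  · have hadj : (G A).Adj x₀ i := ⟨fun h => hix h.symm, hi⟩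
    have heni : en i ∈ A := supp_mem hdc hi (edge_supp.mpr (Or.inr rfl))
    have hrpi : rp A i = rp A x₀ := (rp_eq_of_reachable hx₀ heni hadj.reachable).symm
    obtain ⟨t, ht⟩ := hext (en x₀ + en i) hi (Or.inr (by rw [mdeg_add, mdeg_single, mdeg_single]))
    by_cases htx : t = x₀
    · rw [htx] at ht
      refine hloopcase x₀ (hdc _ ht _ ?_) rfl
      apply le_of_loop
      simp only [Pi.add_apply, en_apply]
      split_ifs <;> first | omega | simp_all
    · by_cases hti : t = i
      · rw [hti] at ht
        refine hloopcase i (hdc _ ht _ ?_) hrpi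
        apply le_of_loop
        simp only [Pi.add_apply, en_apply]
        split_ifs <;> first | omega | simp_all
      · -- triangle x₀ i t
        have h1 : 1 ≤ (en x₀ + en i + en t) x₀ := by
          simp only [Pi.add_apply, en_apply]; split_ifs <;> omega
        have h2 : 1 ≤ (en x₀ + en i + en t) i := by
          simp only [Pi.add_apply, en_apply]; split_ifs <;> omega
        have h3 : 1 ≤ (en x₀ + en i + en t) t := by
          simp only [Pi.add_apply, en_apply]; split_ifs <;> omega
        have hlt : en x₀ + en t ∈ A :=
          hdc _ ht _ (le_of_two x₀ t h1 h3 (fun h => htx h.symm))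
        have hit : en i + en t ∈ A :=
          hdc _ ht _ (le_of_two i t h2 h3 (fun h => hti h.symm))
        have hadjt : (G A).Adj x₀ t := ⟨fun h => htx h.symm, hlt⟩
        have hadjit : (G A).Adj i t := ⟨fun h => hti h.symm, hit⟩
        have := CLS2 hdc hx₀ hadj hadjt hadjit
        omega

lemma CV_congr {p : Fin s} (h : rp A p = rp A x₀) : CV A p = CV A x₀ := by
  simp only [CV, h]

lemma CE_congr {p : Fin s} (h : rp A p = rp A x₀) : CE A p = CE A x₀ := by
  simp only [CE, h]

lemma CT_congr {p : Fin s} (h : rp A p = rp A x₀) : CT A p = CT A x₀ := by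
  simp only [CT, h]

lemma CL_congr {p : Fin s} (h : rp A p = rp A x₀) : CL A p = CL A x₀ := by
  simp only [CL, CE, h]

include hdc hx₀ in
lemma CT_classify : ∀ u ∈ CT A x₀,
    (∃ a b : Fin s, u = en a + en a + en b ∧ en a + en a ∈ A ∧ rp A a = rp A x₀ ∧
      en b ∈ A ∧ rp A b = rp A x₀) ∨
    (∃ α β γ : Fin s, α ≠ β ∧ α ≠ γ ∧ β ≠ γ ∧ u = en α + en β + en γ ∧
      (G A).Adj α β ∧ (G A).Adj α γ ∧ (G A).Adj β γ ∧
      α ∈ CV A x₀ ∧ β ∈ CV A x₀ ∧ γ ∈ CV A x₀) := by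
  intro u hu
  obtain ⟨huA, hd3, hrp⟩ := mem_CT_elim hdc hu
  rcases deg3_classify hd3 with ⟨a, b, hab⟩ | ⟨α, β, γ, hαβ, hαγ, hβγ, habc⟩
  · left
    have hua : 2 ≤ u a := by
      rw [hab]; simp only [Pi.add_apply, en_apply]; split_ifs <;> omega
    have hub : 1 ≤ u b := by
      rw [hab]; simp only [Pi.add_apply, en_apply]; split_ifs <;> omega
    exact ⟨a, b, hab, hdc _ huA _ (le_of_loop a hua),
      hrp a (by omega), supp_mem hdc huA (by omega : u b ≠ 0), hrp b (by omega)⟩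
  · right
    have huα : 1 ≤ u α := by
      rw [habc]; simp only [Pi.add_apply, en_apply]; split_ifs <;> omega
    have huβ : 1 ≤ u β := by
      rw [habc]; simp only [Pi.add_apply, en_apply]; split_ifs <;> omega
    have huγ : 1 ≤ u γ := by
      rw [habc]; simp only [Pi.add_apply, en_apply]; split_ifs <;> omega
    have hαV : α ∈ CV A x₀ :=
      mem_CV_iff.mpr ⟨supp_mem hdc huA (by omega : u α ≠ 0), hrp α (by omega)⟩
    have hβV : β ∈ CV A x₀ :=
      mem_CV_iff.mpr ⟨supp_mem hdc huA (by omega : u β ≠ 0), hrp β (by omega)⟩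
    have hγV : γ ∈ CV A x₀ :=
      mem_CV_iff.mpr ⟨supp_mem hdc huA (by omega : u γ ≠ 0), hrp γ (by omega)⟩
    exact ⟨α, β, γ, hαβ, hαγ, hβγ, habc,
      ⟨hαβ, hdc _ huA _ (le_of_two α β huα huβ hαβ)⟩,
      ⟨hαγ, hdc _ huA _ (le_of_two α γ huα huγ hαγ)⟩,
      ⟨hβγ, hdc _ huA _ (le_of_two β γ huβ huγ hβγ)⟩,
      hαV, hβV, hγV⟩

include hdc hx₀ in
lemma TCOUNT1 (hE : (CE A x₀).card ≤ (CV A x₀).card)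
    {p q w : Fin s} (hpq : (G A).Adj p q) (hpw : (G A).Adj p w) (hqw : (G A).Adj q w)
    (hpV : p ∈ CV A x₀) : (CT A x₀).card ≤ 1 := by
  have hxp : en p ∈ A := (mem_CV_iff.mp hpV).1
  have hrpp : rp A p = rp A x₀ := (mem_CV_iff.mp hpV).2
  have hCL0 : (CL A x₀).card = 0 := by
    have h5 := CLS2 hdc hxp hpq hpw hqw
    rw [CV_congr hrpp, CE_congr hrpp, CL_congr hrpp] at h5
    omega
  apply card_le_one.mpr
  intro u hu u' hu'
  rcases CT_classify hdc hx₀ u hu with ⟨a, b, hab, hloop, hrpa, _, _⟩ | huT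
  · exfalso
    have : en a + en a ∈ CL A x₀ := loop_mem_CL hdc hx₀ hloop hrpa
    rw [card_eq_zero] at hCL0
    rw [hCL0] at this
    exact notMem_empty _ this
  rcases CT_classify hdc hx₀ u' hu' with ⟨a, b, hab, hloop, hrpa, _, _⟩ | huT'
  · exfalso
    have : en a + en a ∈ CL A x₀ := loop_mem_CL hdc hx₀ hloop hrpa
    rw [card_eq_zero] at hCL0
    rw [hCL0] at this
    exact notMem_empty _ this
  obtain ⟨α, β, γ, hαβ, hαγ, hβγ, hu_eq, hAαβ, hAαγ, hAβγ, hαV, hβV, hγV⟩ := huT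
  obtain ⟨α', β', γ', hαβ', hαγ', hβγ', hu_eq', hAαβ', hAαγ', hAβγ', hαV', hβV', hγV'⟩ := huT'
  by_cases hsets : ∀ l : Fin s, (l = α' ∨ l = β' ∨ l = γ') ↔ (l = α ∨ l = β ∨ l = γ)
  · rw [hu_eq, hu_eq']
    exact (triple_eq_of_sets hαβ' hαγ' hβγ' hαβ hαγ hβγ hsets).symm
  · exfalso
    have hxα : en α ∈ A := (mem_CV_iff.mp hαV).1
    have hrpα : rp A α = rp A x₀ := (mem_CV_iff.mp hαV).2
    have h6 := CLS3 hdc hxα hAαβ hAαγ hAβγ hAαβ' hAαγ' hAβγ'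
      (by rw [CV_congr hrpα]; exact hαV')
      (by rw [CV_congr hrpα]; exact hβV')
      (by rw [CV_congr hrpα]; exact hγV') hsets
    rw [CV_congr hrpα, CE_congr hrpα] at h6
    omega

include hdc hx₀ in
lemma TCOUNT (hE : (CE A x₀).card ≤ (CV A x₀).card) :
    (CT A x₀).card ≤ (CV A x₀).card := by
  have hCV1 : 1 ≤ (CV A x₀).card := card_pos.mpr ⟨x₀, x₀_mem_CV hx₀⟩
  by_cases htri : ∃ p q w : Fin s, (G A).Adj p q ∧ (G A).Adj p w ∧ (G A).Adj q w ∧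
      p ∈ CV A x₀ ∧ q ∈ CV A x₀ ∧ w ∈ CV A x₀
  · obtain ⟨p, q, w, hpq, hpw, hqw, hpV, hqV, hwV⟩ := htri
    calc (CT A x₀).card ≤ 1 := TCOUNT1 hdc hx₀ hE hpq hpw hqw hpV
    _ ≤ (CV A x₀).card := hCV1
  · have hCL1 : (CL A x₀).card ≤ 1 := by
      have := CLS1 hdc hx₀
      omega
    have hnotrip : ∀ u ∈ CT A x₀, ∃ a b : Fin s, u = en a + en a + en b ∧
        en a + en a ∈ A ∧ rp A a = rp A x₀ ∧ en b ∈ A ∧ rp A b = rp A x₀ := by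
      intro u hu
      rcases CT_classify hdc hx₀ u hu with h |
        ⟨α, β, γ, hαβ, hαγ, hβγ, _, hAαβ, hAαγ, hAβγ, hαV, hβV, hγV⟩
      · exact h
      · exact absurd ⟨α, β, γ, hAαβ, hAαγ, hAβγ, hαV, hβV, hγV⟩ htri
    by_cases hCL0 : (CL A x₀).card = 0
    · have : CT A x₀ = ∅ := by
        rw [eq_empty_iff_forall_notMem]
        intro u hu
        obtain ⟨a, b, hab, hloop, hrpa, _, _⟩ := hnotrip u hu
        have : en a + en a ∈ CL A x₀ := loop_mem_CL hdc hx₀ hloop hrpa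
        rw [card_eq_zero] at hCL0
        rw [hCL0] at this
        exact notMem_empty _ this
      rw [this]
      simpa using hCV1
    · have hCLeq : (CL A x₀).card = 1 := by omega
      obtain ⟨l, hl⟩ := card_eq_one.mp hCLeq
      have hlmem : l ∈ CL A x₀ := by rw [hl]; exact mem_singleton_self l
      obtain ⟨hlCE, i₀, hi₀⟩ := by
        rw [CL, mem_filter] at hlmem; exact hlmem
      have hsub : CT A x₀ ⊆ (CV A x₀).image (fun j => en i₀ + en i₀ + en j) := by
        intro u hu
        obtain ⟨a, b, hab, hloop, hrpa, hbA, hrpb⟩ := hnotrip u hu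
        have hmem : en a + en a ∈ CL A x₀ := loop_mem_CL hdc hx₀ hloop hrpa
        rw [hl, mem_singleton] at hmem
        rw [hi₀] at hmem
        have hai : a = i₀ := by
          rcases edge_eq hmem with ⟨hc, _⟩ | ⟨hc, _⟩ <;> exact hc
        rw [mem_image]
        exact ⟨b, mem_CV_iff.mpr ⟨hbA, hrpb⟩, by rw [hab, hai]⟩
      calc (CT A x₀).card ≤ ((CV A x₀).image (fun j => en i₀ + en i₀ + en j)).card :=
            card_le_card hsub
      _ ≤ (CV A x₀).card := card_image_le

end Class


lemma crep_en (i : Fin s) : crep A (en i) = ↑(rp A i) := by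
  refine crep_eq_coe (i₀ := i) ?_ ?_
  · rw [en_apply, if_pos rfl]; exact one_ne_zero
  · intro j hj
    rw [en_apply] at hj
    by_cases h : j = i
    · rw [h]
    · rw [if_neg h] at hj; exact absurd rfl hj

lemma key {a : ℕ}
    (hdc : ∀ u ∈ A, ∀ v, v ≤ u → v ∈ A)
    (hext : ∀ u ∈ A, (mdeg u = 1 ∨ mdeg u = 2) → ∃ i, u + en i ∈ A)
    (h1 : (A.filter (fun u => mdeg u = 1)).card = a)
    (h2 : (A.filter (fun u => mdeg u = 2)).card = a)
    (h3 : (A.filter (fun u => mdeg u = 3)).card = a) :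
    (∀ x y : Fin s, x ≠ y → en x + en x ∈ A → en y + en y ∈ A → en x + en y ∈ A → False)
    ∧ (∀ x y z : Fin s, x ≠ y → x ≠ z → y ≠ z →
        en x + en y ∈ A → en x + en z ∈ A → en y + en z ∈ A → False) := by
  have hinreps : ∀ u ∈ A, ∀ i : Fin s, u i ≠ 0 →
      crep A u = ↑(rp A i) ∧
      (↑(rp A i) : WithTop (Fin s)) ∈ (A.filter (fun u => mdeg u = 1)).image (crep A) := by
    intro u hu i hi
    refine ⟨crep_eq_coe hi (fun j hj => supp_rp_eq hdc hu hj hi), ?_⟩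
    rw [mem_image]
    refine ⟨en i, ?_, crep_en i⟩
    rw [mem_filter]
    exact ⟨supp_mem hdc hu hi, mdeg_single i 1⟩
  have hfib1 : (A.filter (fun u => mdeg u = 1)).card =
      ∑ r ∈ (A.filter (fun u => mdeg u = 1)).image (crep A),
        ((A.filter (fun u => mdeg u = 1)).filter (fun u => crep A u = r)).card :=
    card_eq_sum_card_fiberwise (fun u hu => mem_image_of_mem _ hu)
  have hfib2 : (A.filter (fun u => mdeg u = 2)).card =
      ∑ r ∈ (A.filter (fun u => mdeg u = 1)).image (crep A),
        ((A.filter (fun u => mdeg u = 2)).filter (fun u => crep A u = r)).card := by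
    apply card_eq_sum_card_fiberwise
    intro u hu
    rw [Finset.mem_coe, mem_filter] at hu
    obtain ⟨i, j, huij⟩ := deg2_eq hu.2
    have hi : u i ≠ 0 := by rw [huij]; exact edge_supp.mpr (Or.inl rfl)
    obtain ⟨hc, hr⟩ := hinreps u hu.1 i hi
    rw [hc]; exact hr
  have hfib3 : (A.filter (fun u => mdeg u = 3)).card =
      ∑ r ∈ (A.filter (fun u => mdeg u = 1)).image (crep A),
        ((A.filter (fun u => mdeg u = 3)).filter (fun u => crep A u = r)).card := by
    apply card_eq_sum_card_fiberwise
    intro u hu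
    rw [Finset.mem_coe, mem_filter] at hu
    obtain ⟨i, j, k, huijk⟩ := deg3_eq hu.2
    have hi : u i ≠ 0 := by rw [huijk]; exact triple_supp.mpr (Or.inl rfl)
    obtain ⟨hc, hr⟩ := hinreps u hu.1 i hi
    rw [hc]; exact hr
  have hCVcard : ∀ x₀ : Fin s, en x₀ ∈ A →
      ((A.filter (fun u => mdeg u = 1)).filter
        (fun u => crep A u = ↑(rp A x₀))).card = (CV A x₀).card := by
    intro x₀ hx₀
    have hset : (A.filter (fun u => mdeg u = 1)).filter (fun u => crep A u = ↑(rp A x₀)) =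
        (CV A x₀).image en := by
      ext u
      constructor
      · intro hu
        rw [mem_filter, mem_filter] at hu
        obtain ⟨⟨huA, hd1⟩, hcr⟩ := hu
        obtain ⟨j, rfl⟩ := deg1_eq hd1
        rw [mem_image]
        refine ⟨j, ?_, rfl⟩
        rw [mem_CV_iff]
        refine ⟨huA, ?_⟩
        rw [crep_en] at hcr
        exact_mod_cast hcr
      · intro hu
        rw [mem_image] at hu
        obtain ⟨j, hj, rfl⟩ := hu
        rw [mem_CV_iff] at hj
        rw [mem_filter, mem_filter]
        exact ⟨⟨hj.1, mdeg_single j 1⟩, by rw [crep_en, hj.2]⟩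
    rw [hset, card_image_of_injective _ (fun i j h => en_inj h)]
  have hrepx : ∀ r ∈ (A.filter (fun u => mdeg u = 1)).image (crep A),
      ∃ x₀ : Fin s, en x₀ ∈ A ∧ r = ↑(rp A x₀) := by
    intro r hr
    rw [mem_image] at hr
    obtain ⟨u, hu, hcr⟩ := hr
    rw [mem_filter] at hu
    obtain ⟨j, rfl⟩ := deg1_eq hu.2
    exact ⟨rp A j, (rp_spec hu.1).1, by rw [← hcr, crep_en, rp_idem hu.1]⟩
  have hle : ∀ r ∈ (A.filter (fun u => mdeg u = 1)).image (crep A),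
      ((A.filter (fun u => mdeg u = 1)).filter (fun u => crep A u = r)).card ≤
      ((A.filter (fun u => mdeg u = 2)).filter (fun u => crep A u = r)).card := by
    intro r hr
    obtain ⟨x₀, hx₀, rfl⟩ := hrepx r hr
    rw [hCVcard x₀ hx₀]
    exact NONEMP hdc hx₀ hext
  have heq : ∀ r ∈ (A.filter (fun u => mdeg u = 1)).image (crep A),
      ((A.filter (fun u => mdeg u = 2)).filter (fun u => crep A u = r)).card =
      ((A.filter (fun u => mdeg u = 1)).filter (fun u => crep A u = r)).card := by
    by_contra hcon
    push_neg at hcon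
    obtain ⟨r₀, hr₀, hne⟩ := hcon
    have hlt : ((A.filter (fun u => mdeg u = 1)).filter (fun u => crep A u = r₀)).card <
        ((A.filter (fun u => mdeg u = 2)).filter (fun u => crep A u = r₀)).card :=
      lt_of_le_of_ne (hle r₀ hr₀) (fun h => hne h.symm)
    have hslt := Finset.sum_lt_sum hle ⟨r₀, hr₀, hlt⟩
    rw [← hfib1, ← hfib2, h1, h2] at hslt
    exact lt_irrefl _ hslt
  constructor
  · -- no two loops in a class
    intro x y hxy hlx hly hedge
    have henx : en x ∈ A := supp_mem hdc hlx (loop_supp.mpr rfl)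
    have heny : en y ∈ A := supp_mem hdc hly (loop_supp.mpr rfl)
    have hx₀ : en (rp A x) ∈ A := (rp_spec henx).1
    have hrpx : rp A x = rp A (rp A x) := (rp_idem henx).symm
    have hrpy : rp A y = rp A (rp A x) :=
      (rp_eq_of_reachable heny henx (SimpleGraph.Adj.reachable ⟨fun h => hxy h.symm,
        by rwa [add_comm] at hedge⟩)).trans (rp_idem henx).symm
    have hl1 : en x + en x ∈ CL A (rp A x) := loop_mem_CL hdc hx₀ hlx hrpx
    have hl2 : en y + en y ∈ CL A (rp A x) := loop_mem_CL hdc hx₀ hly hrpy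
    have hne12 : en x + en x ≠ en y + en y := by
      intro h
      rcases edge_eq h with ⟨hc, _⟩ | ⟨hc, _⟩ <;> exact hxy hc
    have h2le : 2 ≤ (CL A (rp A x)).card := by
      have hsub : ({en x + en x, en y + en y} : Finset (Fin s → ℕ)) ⊆ CL A (rp A x) := by
        intro m hm
        rw [mem_insert, mem_singleton] at hm
        rcases hm with rfl | rfl
        exacts [hl1, hl2]
      calc 2 = ({en x + en x, en y + en y} : Finset (Fin s → ℕ)).card :=
            (card_pair hne12).symm
      _ ≤ _ := card_le_card hsub
    have hr : (↑(rp A (rp A x)) : WithTop (Fin s)) ∈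
        (A.filter (fun u => mdeg u = 1)).image (crep A) := by
      rw [mem_image]
      refine ⟨en (rp A x), ?_, crep_en _⟩
      rw [mem_filter]
      exact ⟨hx₀, mdeg_single _ 1⟩
    have hEV : (CE A (rp A x)).card = (CV A (rp A x)).card := by
      have h := heq _ hr
      rw [hCVcard _ hx₀] at h
      exact h
    have hCLS := CLS1 hdc hx₀
    omega
  · -- no triangle at all
    intro x y z hxy hxz hyz hexy hexz heyz
    have henx : en x ∈ A := supp_mem hdc hexy (edge_supp.mpr (Or.inl rfl))
    have heny : en y ∈ A := supp_mem hdc hexy (edge_supp.mpr (Or.inr rfl))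
    have henz : en z ∈ A := supp_mem hdc hexz (edge_supp.mpr (Or.inr rfl))
    have hx₀ : en (rp A x) ∈ A := (rp_spec henx).1
    have hadjxy : (G A).Adj x y := ⟨hxy, hexy⟩
    have hadjxz : (G A).Adj x z := ⟨hxz, hexz⟩
    have hadjyz : (G A).Adj y z := ⟨hyz, heyz⟩
    have hrpx : rp A x = rp A (rp A x) := (rp_idem henx).symm
    have hrpy : rp A y = rp A (rp A x) :=
      (rp_eq_of_reachable heny henx hadjxy.symm.reachable).trans (rp_idem henx).symm
    have hrpz : rp A z = rp A (rp A x) :=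
      (rp_eq_of_reachable henz henx hadjxz.symm.reachable).trans (rp_idem henx).symm
    have hxV : x ∈ CV A (rp A x) := mem_CV_iff.mpr ⟨henx, hrpx⟩
    have hyV : y ∈ CV A (rp A x) := mem_CV_iff.mpr ⟨heny, hrpy⟩
    have hzV : z ∈ CV A (rp A x) := mem_CV_iff.mpr ⟨henz, hrpz⟩
    have hr : (↑(rp A (rp A x)) : WithTop (Fin s)) ∈
        (A.filter (fun u => mdeg u = 1)).image (crep A) := by
      rw [mem_image]
      refine ⟨en (rp A x), ?_, crep_en _⟩
      rw [mem_filter]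
      exact ⟨hx₀, mdeg_single _ 1⟩
    -- per class t ≤ v
    have hT_le : ∀ r ∈ (A.filter (fun u => mdeg u = 1)).image (crep A),
        ((A.filter (fun u => mdeg u = 3)).filter (fun u => crep A u = r)).card ≤
        ((A.filter (fun u => mdeg u = 1)).filter (fun u => crep A u = r)).card := by
      intro r hrr
      obtain ⟨x₁, hx₁, rfl⟩ := hrepx r hrr
      rw [hCVcard x₁ hx₁]
      refine TCOUNT hdc hx₁ ?_
      have h := heq _ hrr
      rw [hCVcard x₁ hx₁] at h
      exact le_of_eq h
    -- strict at class of x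
    have hEV : (CE A (rp A x)).card ≤ (CV A (rp A x)).card := by
      have h := heq _ hr
      rw [hCVcard _ hx₀] at h
      exact le_of_eq h
    have hT1 : (CT A (rp A x)).card ≤ 1 := TCOUNT1 hdc hx₀ hEV hadjxy hadjxz hadjyz hxV
    have hV3 : 3 ≤ (CV A (rp A x)).card := by
      have hsub : ({x, y, z} : Finset (Fin s)) ⊆ CV A (rp A x) := by
        intro m hm
        rw [mem_insert, mem_insert, mem_singleton] at hm
        rcases hm with rfl | rfl | rfl
        exacts [hxV, hyV, hzV]
      have hc3 : ({x, y, z} : Finset (Fin s)).card = 3 := by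
        rw [card_insert_of_notMem (by
            rw [mem_insert, mem_singleton]
            rintro (rfl | rfl)
            exacts [hxy rfl, hxz rfl]),
          card_pair hyz]
      calc 3 = ({x, y, z} : Finset (Fin s)).card := hc3.symm
      _ ≤ _ := card_le_card hsub
    have hTlt : ((A.filter (fun u => mdeg u = 3)).filter
        (fun u => crep A u = ↑(rp A (rp A x)))).card <
        ((A.filter (fun u => mdeg u = 1)).filter
        (fun u => crep A u = ↑(rp A (rp A x)))).card := by
      rw [hCVcard _ hx₀]
      calc ((A.filter (fun u => mdeg u = 3)).filter
          (fun u => crep A u = ↑(rp A (rp A x)))).card = (CT A (rp A x)).card := rfl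
      _ ≤ 1 := hT1
      _ < 3 := by omega
      _ ≤ (CV A (rp A x)).card := hV3
    have hslt := Finset.sum_lt_sum hT_le ⟨_, hr, hTlt⟩
    rw [← hfib1, ← hfib3, h1, h3] at hslt
    exact lt_irrefl _ hslt

end Graph
lemma mdeg_mono {s : ℕ} {u v : Fin s → ℕ} (h : u ≤ v) : mdeg u ≤ mdeg v :=
  Finset.sum_le_sum (fun i _ => h i)

lemma mdeg_strict_mono {s : ℕ} {u v : Fin s → ℕ} (h : u ≤ v) (hne : u ≠ v) :
    mdeg u < mdeg v := by
  have hex : ∃ i, u i ≠ v i := by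
    by_contra hc
    push_neg at hc
    exact hne (funext hc)
  obtain ⟨i, hi⟩ := hex
  exact Finset.sum_lt_sum (fun j _ => h j) ⟨i, Finset.mem_univ i, lt_of_le_of_ne (h i) hi⟩

end S8

/-- If `A` is a pure order ideal in `s` variables with h-vector
`(1, a, a, ..., a, b)` of length `n+1`, `n ≥ 4`, then every maximal monomial of
`A` is of the form `x_i^n` or `x_i * x_j^(n-1)` with `i ≠ j`. -/
theorem stmt_8 (n a b s : ℕ) (hn : 4 ≤ n) (ha : 0 < a) (hb : 0 < b)
    (A : Finset (Fin s → ℕ)) (hA : IsOrderIdeal A) (hp : IsPure A)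
    (hh : hVector A = 1 :: (List.replicate (n - 1) a ++ [b])) :
    ∀ u : Fin s → ℕ, IsMaximalIn A u →
      (∃ i : Fin s, u = Pi.single i n) ∨
      (∃ i j : Fin s, i ≠ j ∧ u = Pi.single i 1 + Pi.single j (n - 1)) := by
  classical
  open S8 Finset in
  obtain ⟨hAne, hdc'⟩ := hA
  have hdc : ∀ u ∈ A, ∀ v, v ≤ u → v ∈ A := fun u hu v hv => hdc' u hu v hv
  -- top degree
  have hlen := congrArg List.length hh
  rw [hVector] at hlen
  simp only [List.length_map, List.length_range, List.length_cons, List.length_append,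
    List.length_replicate, List.length_singleton, List.length_nil] at hlen
  have htop : topDegree A = n := by omega
  -- entries
  have hentry : ∀ k, k < n + 1 → hVec A k = (1 :: (List.replicate (n - 1) a ++ [b])).getD k 0 := by
    intro k hk
    have h := congrArg (fun l : List ℕ => l[k]?) hh
    change (hVector A)[k]? = _ at h
    rw [hVector, htop, List.getElem?_map, List.getElem?_range hk, Option.map_some] at h
    rw [List.getD_eq_getElem?_getD, ← h, Option.getD_some]
  have hv1 : hVec A 1 = a := by
    rw [hentry 1 (by omega)]
    obtain ⟨m, hm⟩ : ∃ m, (1 : ℕ) = m + 1 := ⟨0, rfl⟩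
    rw [List.getD_eq_getElem?_getD, hm, List.getElem?_cons_succ, List.getElem?_append,
      if_pos (by simp; omega), List.getElem?_replicate, if_pos (by omega), Option.getD_some]
  have hv2 : hVec A 2 = a := by
    rw [hentry 2 (by omega)]
    rw [List.getD_eq_getElem?_getD, (by rfl : (2 : ℕ) = 1 + 1), List.getElem?_cons_succ,
      List.getElem?_append, if_pos (by simp; omega), List.getElem?_replicate,
      if_pos (by omega), Option.getD_some]
  have hv3 : hVec A 3 = a := by
    rw [hentry 3 (by omega)]
    rw [List.getD_eq_getElem?_getD, (by rfl : (3 : ℕ) = 2 + 1), List.getElem?_cons_succ,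
      List.getElem?_append, if_pos (by simp; omega), List.getElem?_replicate,
      if_pos (by omega), Option.getD_some]
  have hvn : hVec A n = b := by
    rw [hentry n (by omega)]
    obtain ⟨m, hm⟩ : ∃ m, n = m + 1 := ⟨n - 1, by omega⟩
    rw [List.getD_eq_getElem?_getD, hm, List.getElem?_cons_succ,
      List.getElem?_append_right (by simp only [List.length_replicate]; omega)]
    simp only [List.length_replicate]
    rw [(by omega : m - (m + 1 - 1) = 0), List.getElem?_cons_zero, Option.getD_some]
  -- existence of maximal above
  have hmax_above : ∀ u ∈ A, ∃ m, IsMaximalIn A m ∧ u ≤ m := by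
    intro u hu
    obtain ⟨m, hm, hmax⟩ := Finset.exists_max_image (A.filter (fun v => u ≤ v)) mdeg
      ⟨u, Finset.mem_filter.mpr ⟨hu, le_refl u⟩⟩
    rw [Finset.mem_filter] at hm
    refine ⟨m, ⟨hm.1, ?_⟩, hm.2⟩
    intro v hv hmv
    by_contra hne
    have hlt := mdeg_strict_mono hmv (fun h => hne h.symm)
    have := hmax v (Finset.mem_filter.mpr ⟨hv, le_trans hm.2 hmv⟩)
    omega
  -- every maximal has degree n
  have hmaxdeg : ∀ m, IsMaximalIn A m → mdeg m = n := by
    intro m hm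
    have hwne : (A.filter (fun u => mdeg u = n)).Nonempty := by
      rw [← Finset.card_pos, ← hVec]
      omega
    obtain ⟨w, hw⟩ := hwne
    rw [Finset.mem_filter] at hw
    obtain ⟨m', hm', hwm'⟩ := hmax_above w hw.1
    have h1 : mdeg m' ≤ n := by
      rw [← htop]
      exact Finset.le_sup (f := mdeg) hm'.1
    have h2 : n ≤ mdeg m' := hw.2 ▸ mdeg_mono hwm'
    have := hp m m' hm hm'
    omega
  -- extension property
  have hext : ∀ u ∈ A, (mdeg u = 1 ∨ mdeg u = 2) → ∃ i, u + S8.en i ∈ A := by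
    intro u hu hd
    have hlt : mdeg u < n := by omega
    obtain ⟨m, hm, hum⟩ := hmax_above u hu
    have hne : u ≠ m := by
      intro h
      rw [h, hmaxdeg m hm] at hlt
      omega
    have hex : ∃ i, u i < m i := by
      by_contra hc
      push_neg at hc
      exact hne (funext (fun i => le_antisymm (hum i) (hc i)))
    obtain ⟨i, hi⟩ := hex
    refine ⟨i, hdc m hm.1 _ ?_⟩
    intro l
    simp only [Pi.add_apply, S8.en_apply]
    by_cases hl : l = i
    · rw [if_pos hl, hl]; omega
    · rw [if_neg hl]
      simpa using hum l
  -- counts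
  have h1 : (A.filter (fun u => mdeg u = 1)).card = a := hv1
  have h2 : (A.filter (fun u => mdeg u = 2)).card = a := hv2
  have h3 : (A.filter (fun u => mdeg u = 3)).card = a := hv3
  obtain ⟨X1, X2⟩ := S8.key hdc hext h1 h2 h3
  -- final classification
  intro u hu
  have hdeg : mdeg u = n := hmaxdeg u hu
  have huA : u ∈ A := hu.1
  have cons1 : ∀ i j : Fin s, i ≠ j → 2 ≤ u i → 2 ≤ u j → False := by
    intro i j hij h2i h2j
    exact X1 i j hij
      (hdc u huA _ (S8.le_of_loop i h2i))
      (hdc u huA _ (S8.le_of_loop j h2j))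
      (hdc u huA _ (S8.le_of_two i j (by omega) (by omega) hij))
  have cons2 : ∀ i j k : Fin s, i ≠ j → i ≠ k → j ≠ k →
      1 ≤ u i → 1 ≤ u j → 1 ≤ u k → False := by
    intro i j k hij hik hjk h1i h1j h1k
    exact X2 i j k hij hik hjk
      (hdc u huA _ (S8.le_of_two i j h1i h1j hij))
      (hdc u huA _ (S8.le_of_two i k h1i h1k hik))
      (hdc u huA _ (S8.le_of_two j k h1j h1k hjk))
  set T := Finset.univ.filter (fun i => u i ≠ 0) with hT
  have hTcard : T.card ≤ 2 := by
    by_contra hc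
    push_neg at hc
    obtain ⟨i, j, k, hi, hj, hk, hij, hik, hjk⟩ := Finset.two_lt_card_iff.mp hc
    rw [hT, Finset.mem_filter] at hi hj hk
    exact cons2 i j k hij hik hjk (by omega) (by omega) (by omega)
  have hsum : mdeg u = ∑ i ∈ T, u i := by
    rw [mdeg]
    refine (Finset.sum_subset (Finset.subset_univ T) ?_).symm
    intro i _ hiT
    rw [hT, Finset.mem_filter] at hiT
    push_neg at hiT
    exact hiT (Finset.mem_univ i)
  have hT1 : 1 ≤ T.card := by
    by_contra hc
    push_neg at hc
    interval_cases hTc : T.card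
    · rw [Finset.card_eq_zero] at hTc
      rw [hTc, Finset.sum_empty] at hsum
      omega
  rcases (by omega : T.card = 1 ∨ T.card = 2) with hc | hc
  · obtain ⟨i, hi⟩ := Finset.card_eq_one.mp hc
    left
    refine ⟨i, funext (fun l => ?_)⟩
    have hval : u i = n := by
      rw [hi, Finset.sum_singleton] at hsum
      omega
    rw [Pi.single_apply]
    by_cases hl : l = i
    · rw [if_pos hl, hl, hval]
    · rw [if_neg hl]
      by_contra hne
      have : l ∈ T := by
        rw [hT, Finset.mem_filter]
        exact ⟨Finset.mem_univ l, hne⟩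
      rw [hi, Finset.mem_singleton] at this
      exact hl this
  · obtain ⟨i, j, hij, hijT⟩ := Finset.card_eq_two.mp hc
    have hiT : i ∈ T := by rw [hijT]; simp
    have hjT : j ∈ T := by rw [hijT]; simp
    rw [hT, Finset.mem_filter] at hiT hjT
    have hzero : ∀ l, l ≠ i → l ≠ j → u l = 0 := by
      intro l hli hlj
      by_contra hne
      have : l ∈ T := by
        rw [hT, Finset.mem_filter]
        exact ⟨Finset.mem_univ l, hne⟩
      rw [hijT, Finset.mem_insert, Finset.mem_singleton] at this
      tauto
    have hsum2 : u i + u j = n := by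
      rw [hijT, Finset.sum_pair hij] at hsum
      omega
    have hone : u i = 1 ∨ u j = 1 := by
      by_contra hcon
      push_neg at hcon
      exact cons1 i j hij (by omega) (by omega)
    right
    have mkeq : ∀ (p q : Fin s), p ≠ q → u p = 1 → u q = n - 1 →
        (∀ l, l ≠ p → l ≠ q → u l = 0) →
        u = Pi.single p 1 + Pi.single q (n - 1) := by
      intro p q hpq h1p h1q hz
      funext l
      simp only [Pi.add_apply, Pi.single_apply]
      by_cases hlp : l = p
      · subst hlp
        rw [if_pos rfl, if_neg hpq, h1p]
        omega
      · rw [if_neg hlp]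
        by_cases hlq : l = q
        · subst hlq
          rw [if_pos rfl, h1q]
          omega
        · rw [if_neg hlq]
          have h0 := hz l hlp hlq
          omega
    rcases hone with h1 | h1
    · exact ⟨i, j, hij, mkeq i j hij h1 (by omega) hzero⟩
    · exact ⟨j, i, hij.symm, mkeq j i hij.symm h1 (by omega) (fun l ha' hb' => hzero l hb' ha')⟩
end

section
/- Let n ≥ 2 and let s_1, s_2 be nonnegative integers, not both zero. Consider the order ideal A consisting of all divisors of the monomials x_1 x_2^{n−1}, x_3 x_4^{n−1}, ..., x_{2s_1−1} x_{2s_1}^{n−1}, y_1^n, ..., y_{s_2}^n, where the x's and y's are 2s_1 + s_2 pairwise distinct variables. Then A is a pure order ideal and its h-vector is (1, 2s_1 + s_2, 2s_1 + s_2, ..., 2s_1 + s_2, s_1 + s_2), of length n+1 with n−1 middle entries equal to 2s_1 + s_2. -/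
/-- All divisors of a monomial, as a finite set. -/
def divisorSet {s : ℕ} (u : Fin s → ℕ) : Finset (Fin s → ℕ) :=
  Fintype.piFinset (fun i => Finset.range (u i + 1))

/-- The order ideal generated by a finite set of monomials: all their divisors. -/
def generatedIdeal {s : ℕ} (G : Finset (Fin s → ℕ)) : Finset (Fin s → ℕ) :=
  G.biUnion divisorSet

/-- The generators `x_1 x_2^(n-1), ..., x_{2s₁-1} x_{2s₁}^(n-1), y_1^n, ..., y_{s₂}^n`
in `2s₁ + s₂` distinct variables. -/
def gens9 (n s₁ s₂ : ℕ) : Finset (Fin (2 * s₁ + s₂) → ℕ) :=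
  ((Finset.range s₁).image (fun k => (fun i : Fin (2 * s₁ + s₂) =>
      if i.val = 2 * k then 1 else if i.val = 2 * k + 1 then n - 1 else 0))) ∪
  ((Finset.range s₂).image (fun k => (fun i : Fin (2 * s₁ + s₂) =>
      if i.val = 2 * s₁ + k then n else 0)))


def E2 (s₁ s₂ k a b : ℕ) : Fin (2 * s₁ + s₂) → ℕ := fun i =>
  if i.val = 2 * k then a else if i.val = 2 * k + 1 then b else 0

def E1 (s₁ s₂ k c : ℕ) : Fin (2 * s₁ + s₂) → ℕ := fun i =>
  if i.val = 2 * s₁ + k then c else 0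

lemma mem_divisorSet {s : ℕ} {u v : Fin s → ℕ} : u ∈ divisorSet v ↔ u ≤ v := by
  simp [divisorSet, Fintype.mem_piFinset, Nat.lt_succ_iff, Pi.le_def]

lemma mdeg_E2 {s₁ s₂ k : ℕ} (hk : k < s₁) (a b : ℕ) : mdeg (E2 s₁ s₂ k a b) = a + b := by
  unfold mdeg E2
  rw [Fin.sum_univ_eq_sum_range (fun i => if i = 2*k then a else if i = 2*k+1 then b else 0)]
  have : ∀ i, (if i = 2*k then a else if i = 2*k+1 then b else 0)
      = (if i = 2*k then a else 0) + (if i = 2*k+1 then b else 0) := by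
    intro i; split_ifs <;> omega
  simp only [this, Finset.sum_add_distrib, Finset.sum_ite_eq' (Finset.range (2*s₁+s₂))]
  rw [if_pos (by simp; omega), if_pos (by simp; omega)]

lemma mdeg_E1 {s₁ s₂ k : ℕ} (hk : k < s₂) (c : ℕ) : mdeg (E1 s₁ s₂ k c) = c := by
  unfold mdeg E1
  rw [Fin.sum_univ_eq_sum_range (fun i => if i = 2*s₁+k then c else 0)]
  simp only [Finset.sum_ite_eq' (Finset.range (2*s₁+s₂))]
  rw [if_pos (by simp; omega)]

lemma le_E2 {s₁ s₂ k a b : ℕ} (hk : k < s₁) {u : Fin (2*s₁+s₂) → ℕ}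
    (h : u ≤ E2 s₁ s₂ k a b) : ∃ a' ≤ a, ∃ b' ≤ b, u = E2 s₁ s₂ k a' b' := by
  refine ⟨u ⟨2*k, by omega⟩, ?_, u ⟨2*k+1, by omega⟩, ?_, ?_⟩
  · have := h ⟨2*k, by omega⟩; simpa [E2] using this
  · have := h ⟨2*k+1, by omega⟩; simpa [E2] using this
  · funext i
    by_cases h1 : i.val = 2*k
    · have : i = ⟨2*k, by omega⟩ := Fin.ext h1
      simp [E2, this]
    · by_cases h2 : i.val = 2*k+1
      · have : i = ⟨2*k+1, by omega⟩ := Fin.ext h2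
        simp [E2, this]
      · have := h i
        simp only [E2, if_neg h1, if_neg h2] at this ⊢
        omega

lemma le_E1 {s₁ s₂ k c : ℕ} (hk : k < s₂) {u : Fin (2*s₁+s₂) → ℕ}
    (h : u ≤ E1 s₁ s₂ k c) : ∃ c' ≤ c, u = E1 s₁ s₂ k c' := by
  refine ⟨u ⟨2*s₁+k, by omega⟩, ?_, ?_⟩
  · have := h ⟨2*s₁+k, by omega⟩; simpa [E1] using this
  · funext i
    by_cases h1 : i.val = 2*s₁+k
    · have : i = ⟨2*s₁+k, by omega⟩ := Fin.ext h1
      simp [E1, this]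
    · have := h i
      simp only [E1, if_neg h1] at this ⊢
      omega

lemma gens9_eq (n s₁ s₂ : ℕ) : gens9 n s₁ s₂ =
    (Finset.range s₁).image (fun k => E2 s₁ s₂ k 1 (n-1)) ∪
    (Finset.range s₂).image (fun k => E1 s₁ s₂ k n) := rfl

lemma mem_A {n s₁ s₂ : ℕ} {u : Fin (2*s₁+s₂) → ℕ} :
    u ∈ generatedIdeal (gens9 n s₁ s₂) ↔
      (∃ k < s₁, ∃ a ≤ 1, ∃ b ≤ n-1, u = E2 s₁ s₂ k a b) ∨
      (∃ k < s₂, ∃ c ≤ n, u = E1 s₁ s₂ k c) := by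
  constructor
  · intro hu
    obtain ⟨g, hg, hle⟩ := Finset.mem_biUnion.mp hu
    rw [mem_divisorSet] at hle
    rw [gens9_eq, Finset.mem_union] at hg
    rcases hg with hg | hg
    · obtain ⟨k, hk, heq⟩ := Finset.mem_image.mp hg
      simp only [Finset.mem_range] at hk
      subst heq
      obtain ⟨a, ha, b, hb, rfl⟩ := le_E2 hk hle
      exact Or.inl ⟨k, hk, a, ha, b, hb, rfl⟩
    · obtain ⟨k, hk, heq⟩ := Finset.mem_image.mp hg
      simp only [Finset.mem_range] at hk
      subst heq
      obtain ⟨c, hc, rfl⟩ := le_E1 hk hle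
      exact Or.inr ⟨k, hk, c, hc, rfl⟩
  · rintro (⟨k, hk, a, ha, b, hb, rfl⟩ | ⟨k, hk, c, hc, rfl⟩)
    · refine Finset.mem_biUnion.mpr ⟨E2 s₁ s₂ k 1 (n-1), ?_, mem_divisorSet.mpr ?_⟩
      · rw [gens9_eq, Finset.mem_union]
        exact Or.inl (Finset.mem_image.mpr ⟨k, Finset.mem_range.mpr hk, rfl⟩)
      · intro i
        simp only [E2]
        split_ifs <;> omega
    · refine Finset.mem_biUnion.mpr ⟨E1 s₁ s₂ k n, ?_, mem_divisorSet.mpr ?_⟩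
      · rw [gens9_eq, Finset.mem_union]
        exact Or.inr (Finset.mem_image.mpr ⟨k, Finset.mem_range.mpr hk, rfl⟩)
      · intro i
        simp only [E1]
        split_ifs <;> omega

lemma filter_mid {n s₁ s₂ i : ℕ} (h1 : 1 ≤ i) (h2 : i < n) :
    (generatedIdeal (gens9 n s₁ s₂)).filter (fun u => mdeg u = i) =
      ((Finset.range s₁).image (fun k => E2 s₁ s₂ k 0 i) ∪
       (Finset.range s₁).image (fun k => E2 s₁ s₂ k 1 (i-1))) ∪
      (Finset.range s₂).image (fun k => E1 s₁ s₂ k i) := by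
  ext u
  simp only [Finset.mem_filter, Finset.mem_union, Finset.mem_image, Finset.mem_range, mem_A]
  constructor
  · rintro ⟨(⟨k, hk, a, ha, b, hb, rfl⟩ | ⟨k, hk, c, hc, rfl⟩), hdeg⟩
    · rw [mdeg_E2 hk] at hdeg
      obtain rfl | rfl : a = 0 ∨ a = 1 := by omega
      · have hb' : b = i := by omega
        subst hb'
        exact Or.inl (Or.inl ⟨k, hk, rfl⟩)
      · have hb' : b = i - 1 := by omega
        subst hb'
        exact Or.inl (Or.inr ⟨k, hk, rfl⟩)
    · rw [mdeg_E1 hk] at hdeg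
      subst hdeg
      exact Or.inr ⟨k, hk, rfl⟩
  · rintro ((⟨k, hk, rfl⟩ | ⟨k, hk, rfl⟩) | ⟨k, hk, rfl⟩)
    · exact ⟨Or.inl ⟨k, hk, 0, by omega, i, by omega, rfl⟩, by rw [mdeg_E2 hk]; omega⟩
    · exact ⟨Or.inl ⟨k, hk, 1, le_refl 1, i-1, by omega, rfl⟩, by rw [mdeg_E2 hk]; omega⟩
    · exact ⟨Or.inr ⟨k, hk, i, by omega, rfl⟩, by rw [mdeg_E1 hk]⟩

lemma filter_top {n s₁ s₂ : ℕ} (hn : 2 ≤ n) :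
    (generatedIdeal (gens9 n s₁ s₂)).filter (fun u => mdeg u = n) =
      (Finset.range s₁).image (fun k => E2 s₁ s₂ k 1 (n-1)) ∪
      (Finset.range s₂).image (fun k => E1 s₁ s₂ k n) := by
  ext u
  simp only [Finset.mem_filter, Finset.mem_union, Finset.mem_image, Finset.mem_range, mem_A]
  constructor
  · rintro ⟨(⟨k, hk, a, ha, b, hb, rfl⟩ | ⟨k, hk, c, hc, rfl⟩), hdeg⟩
    · rw [mdeg_E2 hk] at hdeg
      obtain rfl | rfl : a = 0 ∨ a = 1 := by omega
      · exfalso; omega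
      · have hb' : b = n - 1 := by omega
        subst hb'
        exact Or.inl ⟨k, hk, rfl⟩
    · rw [mdeg_E1 hk] at hdeg
      subst hdeg
      exact Or.inr ⟨k, hk, rfl⟩
  · rintro (⟨k, hk, rfl⟩ | ⟨k, hk, rfl⟩)
    · exact ⟨Or.inl ⟨k, hk, 1, le_refl 1, n-1, le_refl _, rfl⟩, by rw [mdeg_E2 hk]; omega⟩
    · exact ⟨Or.inr ⟨k, hk, n, le_refl n, rfl⟩, by rw [mdeg_E1 hk]⟩

lemma card_img1 {s₁ s₂ i : ℕ} (hi : 1 ≤ i) :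
    ((Finset.range s₁).image (fun k => E2 s₁ s₂ k 0 i)).card = s₁ := by
  rw [Finset.card_image_of_injOn, Finset.card_range]
  intro k hk k' hk' h
  simp only [Finset.coe_range, Set.mem_Iio] at hk hk'
  have := congrFun h ⟨2*k+1, by omega⟩
  simp only [E2] at this
  split_ifs at this <;> omega

lemma card_img2 {s₁ s₂ : ℕ} (b : ℕ) :
    ((Finset.range s₁).image (fun k => E2 s₁ s₂ k 1 b)).card = s₁ := by
  rw [Finset.card_image_of_injOn, Finset.card_range]
  intro k hk k' hk' h
  simp only [Finset.coe_range, Set.mem_Iio] at hk hk'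
  have := congrFun h ⟨2*k, by omega⟩
  simp only [E2] at this
  split_ifs at this <;> omega

lemma card_img3 {s₁ s₂ c : ℕ} (hc : 1 ≤ c) :
    ((Finset.range s₂).image (fun k => E1 s₁ s₂ k c)).card = s₂ := by
  rw [Finset.card_image_of_injOn, Finset.card_range]
  intro k hk k' hk' h
  simp only [Finset.coe_range, Set.mem_Iio] at hk hk'
  have := congrFun h ⟨2*s₁+k, by omega⟩
  simp only [E1] at this
  split_ifs at this <;> omega

lemma disj12 {s₁ s₂ i b : ℕ} :
    Disjoint ((Finset.range s₁).image (fun k => E2 s₁ s₂ k 0 i))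
      ((Finset.range s₁).image (fun k => E2 s₁ s₂ k 1 b)) := by
  rw [Finset.disjoint_left]
  simp only [Finset.mem_image, Finset.mem_range]
  rintro u ⟨k, hk, rfl⟩ ⟨k', hk', h⟩
  have := congrFun h ⟨2*k', by omega⟩
  simp only [E2] at this
  split_ifs at this <;> omega

lemma disjE2E1 {s₁ s₂ a b c : ℕ} (hc : 1 ≤ c) :
    Disjoint ((Finset.range s₁).image (fun k => E2 s₁ s₂ k a b))
      ((Finset.range s₂).image (fun k => E1 s₁ s₂ k c)) := by
  rw [Finset.disjoint_left]
  simp only [Finset.mem_image, Finset.mem_range]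
  rintro u ⟨k, hk, rfl⟩ ⟨k', hk', h⟩
  have := congrFun h ⟨2*s₁+k', by omega⟩
  simp only [E2, E1] at this
  split_ifs at this <;> omega

lemma zero_mem_A {n s₁ s₂ : ℕ} (hs : ¬(s₁ = 0 ∧ s₂ = 0)) :
    (0 : Fin (2*s₁+s₂) → ℕ) ∈ generatedIdeal (gens9 n s₁ s₂) := by
  rw [mem_A]
  rcases Nat.eq_zero_or_pos s₁ with h | h
  · refine Or.inr ⟨0, by omega, 0, by omega, ?_⟩
    funext i; simp [E1]
  · refine Or.inl ⟨0, h, 0, by omega, 0, by omega, ?_⟩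
    funext i; simp [E2]

lemma hVec_zero {n s₁ s₂ : ℕ} (hs : ¬(s₁ = 0 ∧ s₂ = 0)) :
    hVec (generatedIdeal (gens9 n s₁ s₂)) 0 = 1 := by
  unfold hVec
  have : (generatedIdeal (gens9 n s₁ s₂)).filter (fun u => mdeg u = 0) = {0} := by
    ext u
    simp only [Finset.mem_filter, Finset.mem_singleton]
    constructor
    · rintro ⟨hu, h0⟩
      funext i
      have := (Finset.sum_eq_zero_iff.mp h0) i (Finset.mem_univ i)
      simpa using this
    · rintro rfl
      exact ⟨zero_mem_A hs, by simp [mdeg]⟩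
  rw [this, Finset.card_singleton]

lemma mdeg_le {n s₁ s₂ : ℕ} (hn : 2 ≤ n) {u : Fin (2*s₁+s₂) → ℕ}
    (hu : u ∈ generatedIdeal (gens9 n s₁ s₂)) : mdeg u ≤ n := by
  rcases mem_A.mp hu with ⟨k, hk, a, ha, b, hb, rfl⟩ | ⟨k, hk, c, hc, rfl⟩
  · rw [mdeg_E2 hk]; omega
  · rw [mdeg_E1 hk]; omega

lemma hVec_gt {n s₁ s₂ i : ℕ} (hn : 2 ≤ n) (h : n < i) :
    hVec (generatedIdeal (gens9 n s₁ s₂)) i = 0 := by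
  unfold hVec
  rw [Finset.card_eq_zero, Finset.filter_eq_empty_iff]
  intro u hu
  have := mdeg_le hn hu
  omega

lemma hVec_mid {n s₁ s₂ i : ℕ} (h1 : 1 ≤ i) (h2 : i < n) :
    hVec (generatedIdeal (gens9 n s₁ s₂)) i = 2*s₁+s₂ := by
  unfold hVec
  rw [filter_mid h1 h2,
    Finset.card_union_of_disjoint
      (Finset.disjoint_union_left.mpr ⟨disjE2E1 h1, disjE2E1 h1⟩),
    Finset.card_union_of_disjoint disj12, card_img1 h1, card_img2, card_img3 h1]
  omega

lemma hVec_top {n s₁ s₂ : ℕ} (hn : 2 ≤ n) :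
    hVec (generatedIdeal (gens9 n s₁ s₂)) n = s₁+s₂ := by
  unfold hVec
  rw [filter_top hn, Finset.card_union_of_disjoint (disjE2E1 (by omega)),
    card_img2, card_img3 (by omega)]

lemma top_mem {n s₁ s₂ : ℕ} (hn : 2 ≤ n) (hs : ¬(s₁ = 0 ∧ s₂ = 0)) :
    ∃ u ∈ generatedIdeal (gens9 n s₁ s₂), mdeg u = n := by
  rcases Nat.eq_zero_or_pos s₁ with h | h
  · have h2 : 0 < s₂ := by omega
    exact ⟨E1 s₁ s₂ 0 n, mem_A.mpr (Or.inr ⟨0, h2, n, le_rfl, rfl⟩), mdeg_E1 h2 n⟩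
  · exact ⟨E2 s₁ s₂ 0 1 (n-1), mem_A.mpr (Or.inl ⟨0, h, 1, le_rfl, n-1, le_rfl, rfl⟩),
      by rw [mdeg_E2 h]; omega⟩

lemma topDegree_eq {n s₁ s₂ : ℕ} (hn : 2 ≤ n) (hs : ¬(s₁ = 0 ∧ s₂ = 0)) :
    topDegree (generatedIdeal (gens9 n s₁ s₂)) = n := by
  apply le_antisymm
  · exact Finset.sup_le (fun u hu => mdeg_le hn hu)
  · obtain ⟨u, hu, hd⟩ := top_mem hn hs
    calc n = mdeg u := hd.symm
    _ ≤ _ := Finset.le_sup hu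

lemma mdeg_gens {n s₁ s₂ : ℕ} (hn : 2 ≤ n) {g : Fin (2*s₁+s₂) → ℕ}
    (hg : g ∈ gens9 n s₁ s₂) : mdeg g = n := by
  rw [gens9_eq, Finset.mem_union] at hg
  rcases hg with hg | hg
  · obtain ⟨k, hk, rfl⟩ := Finset.mem_image.mp hg
    rw [Finset.mem_range] at hk
    rw [mdeg_E2 hk]; omega
  · obtain ⟨k, hk, rfl⟩ := Finset.mem_image.mp hg
    rw [Finset.mem_range] at hk
    rw [mdeg_E1 hk]

lemma maximal_deg {n s₁ s₂ : ℕ} (hn : 2 ≤ n) {u : Fin (2*s₁+s₂) → ℕ}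
    (hu : IsMaximalIn (generatedIdeal (gens9 n s₁ s₂)) u) : mdeg u = n := by
  obtain ⟨huA, hmax⟩ := hu
  obtain ⟨g, hg, hle⟩ := Finset.mem_biUnion.mp huA
  rw [mem_divisorSet] at hle
  have hgA : g ∈ generatedIdeal (gens9 n s₁ s₂) :=
    Finset.mem_biUnion.mpr ⟨g, hg, mem_divisorSet.mpr le_rfl⟩
  have heq := hmax g hgA hle
  rw [← heq]
  exact mdeg_gens hn hg


/-- The order ideal generated by the monomials
`x_1 x_2^(n-1), ..., x_{2s₁-1} x_{2s₁}^(n-1), y_1^n, ..., y_{s₂}^n` is a pure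
order ideal with h-vector `(1, 2s₁+s₂, ..., 2s₁+s₂, s₁+s₂)` of length `n+1`. -/
theorem stmt_9 (n s₁ s₂ : ℕ) (hn : 2 ≤ n) (hs : ¬(s₁ = 0 ∧ s₂ = 0)) :
    IsOrderIdeal (generatedIdeal (gens9 n s₁ s₂)) ∧
    IsPure (generatedIdeal (gens9 n s₁ s₂)) ∧
    hVector (generatedIdeal (gens9 n s₁ s₂)) =
      1 :: (List.replicate (n - 1) (2 * s₁ + s₂) ++ [s₁ + s₂]) := by
  refine ⟨⟨⟨0, zero_mem_A hs⟩, ?_⟩, ?_, ?_⟩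
  · intro u hu v hv
    obtain ⟨g, hg, hle⟩ := Finset.mem_biUnion.mp hu
    exact Finset.mem_biUnion.mpr
      ⟨g, hg, mem_divisorSet.mpr (le_trans hv (mem_divisorSet.mp hle))⟩
  · intro u v hu hv
    rw [maximal_deg hn hu, maximal_deg hn hv]
  · rw [hVector, topDegree_eq hn hs]
    apply List.ext_getElem
    · simp
      omega
    · intro j h1 h2
      rw [List.getElem_map, List.getElem_range]
      simp only [List.length_map, List.length_range] at h1
      obtain rfl | ⟨j', rfl⟩ : j = 0 ∨ ∃ j', j = j' + 1 := by
        rcases j with _ | j'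
        · exact Or.inl rfl
        · exact Or.inr ⟨j', rfl⟩
      · rw [List.getElem_cons_zero, hVec_zero hs]
      · rw [List.getElem_cons_succ]
        by_cases hj : j' < n - 1
        · rw [List.getElem_append_left (by simpa using hj), List.getElem_replicate]
          exact hVec_mid (by omega) (by omega)
        · have hj' : j' = n - 1 := by omega
          subst hj'
          rw [List.getElem_append_right (by simp)]
          simp only [List.length_replicate, Nat.sub_self, List.getElem_singleton]
          have hnn : n - 1 + 1 = n := by omega
          rw [hnn, hVec_top hn]
end

section
/- Let n ≥ 3 and let a, b be positive integers. If the sequence (1, a, a, ..., a, b) of length n+1 (with n−1 middle entries all equal to a) is a pure O-sequence, then b ≤ a ≤ (b+1)(n+1). -/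
namespace Stmt11

open Finset
open scoped Classical
set_option maxHeartbeats 1000000

variable {s : ℕ}

/-- the monomial `x_i` -/
def E (i : Fin s) : Fin s → ℕ := fun j => if j = i then 1 else 0

@[simp] lemma E_apply_self (i : Fin s) : E i i = 1 := by simp [E]

lemma E_apply_ne {i j : Fin s} (h : j ≠ i) : E i j = 0 := by simp [E, h]

lemma mdeg_E (i : Fin s) : mdeg (E i) = 1 := by
  simp [mdeg, E]

lemma mdeg_add (u v : Fin s → ℕ) : mdeg (u + v) = mdeg u + mdeg v := by
  simp [mdeg, Finset.sum_add_distrib]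

lemma E_inj {i j : Fin s} (h : E i = E j) : i = j := by
  by_contra hne
  have h2 := congrFun h i
  rw [E_apply_self, E_apply_ne hne] at h2
  exact one_ne_zero h2

lemma mdeg_eq_zero {u : Fin s → ℕ} (h : mdeg u = 0) : u = 0 := by
  funext i
  have := Finset.sum_eq_zero_iff.mp h i (mem_univ i)
  simpa using this

lemma mdeg_mono {u v : Fin s → ℕ} (h : u ≤ v) : mdeg u ≤ mdeg v :=
  Finset.sum_le_sum fun i _ => h i

lemma E_le_iff {i : Fin s} {u : Fin s → ℕ} : E i ≤ u ↔ 1 ≤ u i := by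
  constructor
  · intro h; have := h i; simpa using this
  · intro h j
    by_cases hj : j = i
    · subst hj; simpa using h
    · simp [E_apply_ne hj]

lemma add_E_le_iff {i : Fin s} {v u : Fin s → ℕ} : v + E i ≤ u ↔ v i + 1 ≤ u i ∧ ∀ j, j ≠ i → v j ≤ u j := by
  constructor
  · intro h
    refine ⟨by have := h i; simpa using this, fun j hj => by have := h j; simpa [E_apply_ne hj] using this⟩
  · rintro ⟨h1, h2⟩ j
    by_cases hj : j = i
    · subst hj; simpa using h1
    · simpa [E_apply_ne hj] using h2 j hj

/-- decompose a monomial of positive degree -/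
lemma exists_decomp {u : Fin s → ℕ} {k : ℕ} (h : mdeg u = k + 1) :
    ∃ i v, mdeg v = k ∧ u = v + E i := by
  have hne : ∃ i, u i ≠ 0 := by
    by_contra hc
    push_neg at hc
    have : u = 0 := funext hc
    rw [this] at h
    simp [mdeg] at h
  obtain ⟨i, hi⟩ := hne
  refine ⟨i, fun j => u j - E i j, ?_, ?_⟩
  · have : mdeg (fun j => u j - E i j) + mdeg (E i) = mdeg u := by
      rw [← mdeg_add]
      congr 1
      funext j
      by_cases hj : j = i
      · subst hj; simp; omega
      · simp [E_apply_ne hj]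
    rw [mdeg_E, h] at this
    omega
  · funext j
    by_cases hj : j = i
    · subst hj; simp; omega
    · simp [E_apply_ne hj]

lemma deg_one_form {u : Fin s → ℕ} (h : mdeg u = 1) : ∃ i, u = E i := by
  obtain ⟨i, v, hv, huv⟩ := exists_decomp h
  exact ⟨i, by rw [huv, mdeg_eq_zero hv, zero_add]⟩

lemma deg_two_form {u : Fin s → ℕ} (h : mdeg u = 2) : ∃ i j, u = E i + E j := by
  obtain ⟨i, v, hv, huv⟩ := exists_decomp h
  obtain ⟨j, hj⟩ := deg_one_form hv
  exact ⟨j, i, by rw [huv, hj]⟩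

/-- the two-variable pair of a degree-2 monomial is unique up to order -/
lemma pair_eq {i j k l : Fin s} (h : E i + E j = E k + E l) :
    (i = k ∧ j = l) ∨ (i = l ∧ j = k) := by
  by_cases hik : i = k
  · subst hik
    exact Or.inl ⟨rfl, E_inj (add_left_cancel h)⟩
  · have hil : i = l := by
      by_contra hil
      have hcongr := congrFun h i
      have h1 : 1 ≤ (E i + E j) i := by simp [Pi.add_apply]
      rw [hcongr] at h1
      rw [Pi.add_apply, E_apply_ne hik, E_apply_ne hil] at h1
      exact absurd h1 (by norm_num)
    subst hil
    refine Or.inr ⟨rfl, E_inj ?_⟩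
    have h' : E i + E j = E i + E k := by rw [h, add_comm]
    exact add_left_cancel h'


/-- support of a monomial -/
def supp (u : Fin s → ℕ) : Finset (Fin s) := Finset.univ.filter (fun i => u i ≠ 0)

lemma mem_supp {u : Fin s → ℕ} {i : Fin s} : i ∈ supp u ↔ u i ≠ 0 := by
  simp [supp]

lemma supp_nonempty {u : Fin s → ℕ} (h : mdeg u ≠ 0) : (supp u).Nonempty := by
  by_contra hc
  rw [Finset.not_nonempty_iff_eq_empty] at hc
  apply h
  apply Finset.sum_eq_zero
  intro i _
  by_contra hi
  have : i ∈ supp u := mem_supp.mpr hi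
  rw [hc] at this
  exact absurd this (Finset.notMem_empty i)

lemma card_supp_le_mdeg (u : Fin s → ℕ) : (supp u).card ≤ mdeg u := by
  calc (supp u).card = ∑ i ∈ supp u, 1 := by simp
  _ ≤ ∑ i ∈ supp u, u i := Finset.sum_le_sum (fun i hi => by
      have := mem_supp.mp hi; omega)
  _ ≤ ∑ i, u i := Finset.sum_le_sum_of_subset (Finset.filter_subset _ _)
  _ = mdeg u := rfl

lemma supp_E_add_E {i j : Fin s} : supp (E i + E j) = {i, j} := by
  ext x
  simp only [mem_supp, Pi.add_apply, Finset.mem_insert, Finset.mem_singleton]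
  by_cases hxi : x = i
  · subst hxi; simp
  · by_cases hxj : x = j
    · subst hxj; simp
    · simp [E_apply_ne hxi, E_apply_ne hxj, hxi, hxj]

section Ideal

variable {A : Finset (Fin s → ℕ)} (hA : IsOrderIdeal A)

lemma exists_maximal_above (hA : IsOrderIdeal A) {u : Fin s → ℕ} (hu : u ∈ A) :
    ∃ m, IsMaximalIn A m ∧ u ≤ m := by
  obtain ⟨m, hm, hmax⟩ := Finset.exists_maximal (s := A.filter (fun v => u ≤ v))
    ⟨u, Finset.mem_filter.mpr ⟨hu, le_refl u⟩⟩
  simp only [Finset.mem_filter] at hm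
  refine ⟨m, ⟨hm.1, fun v hv hmv => ?_⟩, hm.2⟩
  by_contra hne
  exact hne (le_antisymm (hmax (Finset.mem_filter.mpr ⟨hv, le_trans hm.2 hmv⟩) hmv) hmv)

lemma exists_coord_lt {v m : Fin s → ℕ} (hle : v ≤ m) (hlt : mdeg v < mdeg m) :
    ∃ i, v i < m i := by
  by_contra hc
  push_neg at hc
  have : mdeg m ≤ mdeg v := Finset.sum_le_sum (fun i _ => hc i)
  omega

/-- interpolation: between u and m there are monomials of every degree -/
lemma exists_interp {u m : Fin s → ℕ} (hle : u ≤ m) :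
    ∀ j, mdeg u + j ≤ mdeg m → ∃ v, u ≤ v ∧ v ≤ m ∧ mdeg v = mdeg u + j := by
  intro j
  induction j with
  | zero => intro _; exact ⟨u, le_refl u, hle, by omega⟩
  | succ k ih =>
    intro hk
    obtain ⟨v, huv, hvm, hdv⟩ := ih (by omega)
    obtain ⟨i, hi⟩ := exists_coord_lt hvm (by omega)
    refine ⟨v + E i, le_trans huv (by intro x; simp [Pi.add_apply]), ?_, ?_⟩
    · intro x
      by_cases hx : x = i
      · subst hx; simp [Pi.add_apply]; omega
      · simp [Pi.add_apply, E_apply_ne hx]; exact hvm x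
    · rw [mdeg_add, mdeg_E]; omega

end Ideal



section Components

variable (A : Finset (Fin s → ℕ))

/-- adjacency of variables -/
def Srel (i j : Fin s) : Prop := i ≠ j ∧ E i + E j ∈ A

lemma Srel_symm : Symmetric (Srel A) := by
  rintro i j ⟨hne, hm⟩
  exact ⟨hne.symm, by rwa [add_comm] at hm⟩

/-- reachability (connected component relation) -/
def reach : Fin s → Fin s → Prop := Relation.ReflTransGen (Srel A)

lemma reach_symm {x y : Fin s} (h : reach A x y) : reach A y x :=
  (@Relation.ReflTransGen.symmetric _ _ ⟨fun _ _ h => Srel_symm A h⟩).symm _ _ h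

lemma reach_trans {x y z : Fin s} (h1 : reach A x y) (h2 : reach A y z) : reach A x z :=
  Relation.ReflTransGen.trans h1 h2

/-- the component of a vertex, as a finset -/
noncomputable def κ (x : Fin s) : Finset (Fin s) := Finset.univ.filter (reach A x)

lemma mem_κ {x y : Fin s} : y ∈ κ A x ↔ reach A x y := by simp [κ]

lemma E_add_E_le {u : Fin s → ℕ} {i j : Fin s} (hij : i ≠ j)
    (hi : u i ≠ 0) (hj : u j ≠ 0) : E i + E j ≤ u := by
  intro x
  show E i x + E j x ≤ u x
  simp only [E]
  by_cases hxi : x = i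
  · rw [if_pos hxi, if_neg (fun h : x = j => hij (hxi.symm.trans h)), hxi]
    omega
  · by_cases hxj : x = j
    · rw [if_neg hxi, if_pos hxj, hxj]
      omega
    · rw [if_neg hxi, if_neg hxj]
      omega

lemma self_mem_κ (x : Fin s) : x ∈ κ A x := (mem_κ A).mpr Relation.ReflTransGen.refl

lemma κ_eq {x y : Fin s} (h : reach A x y) : κ A x = κ A y := by
  ext z
  simp only [mem_κ]
  exact ⟨fun h2 => reach_trans A (reach_symm A h) h2, fun h2 => reach_trans A h h2⟩

/-- the component of a monomial -/
noncomputable def κm (u : Fin s → ℕ) : Finset (Fin s) :=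
  Finset.univ.filter (fun y => ∃ x ∈ supp u, reach A x y)

variable {A}

lemma supp_conn (hA : IsOrderIdeal A) {u : Fin s → ℕ} (hu : u ∈ A) {i j : Fin s}
    (hi : i ∈ supp u) (hj : j ∈ supp u) : reach A i j := by
  by_cases hij : i = j
  · subst hij; exact Relation.ReflTransGen.refl
  · refine Relation.ReflTransGen.single ⟨hij, ?_⟩
    exact hA.2 u hu _ (E_add_E_le hij (mem_supp.mp hi) (mem_supp.mp hj))

lemma κm_eq (hA : IsOrderIdeal A) {u : Fin s → ℕ} (hu : u ∈ A) {x : Fin s}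
    (hx : x ∈ supp u) : κm A u = κ A x := by
  ext y
  simp only [κm, κ, Finset.mem_filter, Finset.mem_univ, true_and]
  constructor
  · rintro ⟨x', hx', hr⟩
    exact reach_trans A (supp_conn hA hu hx hx') hr
  · intro hr
    exact ⟨x, hx, hr⟩

/-- bounded-length reachability -/
def reachIn (x₀ : Fin s) : ℕ → Fin s → Prop
  | 0 => fun y => y = x₀
  | (m+1) => fun y => ∃ w, reachIn x₀ m w ∧ Srel A w y

lemma reach_iff_reachIn {x₀ y : Fin s} : reach A x₀ y ↔ ∃ m, reachIn (A := A) x₀ m y := by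
  constructor
  · intro h
    induction h with
    | refl => exact ⟨0, rfl⟩
    | tail h1 h2 ih =>
      obtain ⟨m, hm⟩ := ih
      exact ⟨m + 1, _, hm, h2⟩
  · rintro ⟨m, h⟩
    induction m generalizing y with
    | zero =>
      rw [show y = x₀ from h]
      exact Relation.ReflTransGen.refl
    | succ k ih =>
      obtain ⟨w, hw, hwy⟩ := h
      exact Relation.ReflTransGen.tail (ih hw) hwy

variable (A)

/-- distance from the root of a component -/
noncomputable def dst (x₀ y : Fin s) : ℕ :=
  if h : ∃ m, reachIn (A := A) x₀ m y then Nat.find h else 0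

variable {A}

lemma dst_spec {x₀ y : Fin s} (h : ∃ m, reachIn (A := A) x₀ m y) :
    reachIn (A := A) x₀ (dst A x₀ y) y := by
  rw [dst, dif_pos h]; exact Nat.find_spec h

lemma dst_min {x₀ y : Fin s} {m : ℕ} (h : reachIn (A := A) x₀ m y) : dst A x₀ y ≤ m := by
  rw [dst, dif_pos ⟨m, h⟩]; exact Nat.find_min' _ h

lemma dst_self (x₀ : Fin s) : dst A x₀ x₀ = 0 :=
  Nat.le_zero.mp (dst_min (by rfl : reachIn (A := A) x₀ 0 x₀))

/-- every non-root vertex of a component has a parent at smaller distance -/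
lemma exists_parent {x₀ y : Fin s} (h : reach A x₀ y) (hne : y ≠ x₀) :
    ∃ w, Srel A w y ∧ dst A x₀ w + 1 = dst A x₀ y ∧ reach A x₀ w := by
  have hex : ∃ m, reachIn (A := A) x₀ m y := reach_iff_reachIn.mp h
  have hs := dst_spec hex
  cases hd : dst A x₀ y with
  | zero => rw [hd] at hs; exact absurd hs hne
  | succ k =>
    rw [hd] at hs
    obtain ⟨w, hw, hwy⟩ := hs
    have h1 : dst A x₀ w ≤ k := dst_min hw
    have h2 : dst A x₀ y ≤ dst A x₀ w + 1 := dst_min ⟨w, dst_spec ⟨k, hw⟩, hwy⟩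
    refine ⟨w, hwy, by omega, reach_iff_reachIn.mpr ⟨k, hw⟩⟩

end Components



section Core

variable (A : Finset (Fin s → ℕ))

/-- homogeneous part of degree k -/
def D (k : ℕ) : Finset (Fin s → ℕ) := A.filter (fun u => mdeg u = k)

def isLoop (u : Fin s → ℕ) : Prop := ∃ i, u = E i + E i

/-- degree 2 part in a given component -/
noncomputable def efib (K : Finset (Fin s)) : Finset (Fin s → ℕ) :=
  (D A 2).filter (fun u => κm A u = K)

noncomputable def plainE (K : Finset (Fin s)) : Finset (Fin s → ℕ) :=
  (efib A K).filter (fun u => ¬ isLoop u)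

noncomputable def loopE (K : Finset (Fin s)) : Finset (Fin s → ℕ) :=
  (efib A K).filter isLoop

/-- top degree part in a given component -/
noncomputable def zfib (n : ℕ) (K : Finset (Fin s)) : Finset (Fin s → ℕ) :=
  (D A n).filter (fun u => κm A u = K)

variable {A}

lemma mem_D {k : ℕ} {u : Fin s → ℕ} : u ∈ D A k ↔ u ∈ A ∧ mdeg u = k := by
  simp [D]

lemma efib_card_split (K : Finset (Fin s)) :
    (efib A K).card = (plainE A K).card + (loopE A K).card := by
  have h := Finset.card_filter_add_card_filter_not (s := efib A K) (p := isLoop)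
  rw [plainE, loopE]
  omega

lemma edge_mem_plainE (hA : IsOrderIdeal A) {x₀ i j : Fin s} (hij : i ≠ j)
    (hm : E i + E j ∈ A) (hi : reach A x₀ i) : E i + E j ∈ plainE A (κ A x₀) := by
  refine Finset.mem_filter.mpr ⟨Finset.mem_filter.mpr ⟨mem_D.mpr ⟨hm, by simp [mdeg_add, mdeg_E]⟩, ?_⟩, ?_⟩
  · rw [κm_eq hA hm (show i ∈ supp (E i + E j) by rw [supp_E_add_E]; simp)]
    exact (κ_eq A hi).symm
  · rintro ⟨t, ht⟩
    rcases pair_eq ht with ⟨h1, h2⟩ | ⟨h1, h2⟩ <;> exact hij (h1.trans h2.symm)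

lemma loop_mem_loopE (hA : IsOrderIdeal A) {x₀ i : Fin s}
    (hm : E i + E i ∈ A) (hi : reach A x₀ i) : E i + E i ∈ loopE A (κ A x₀) := by
  refine Finset.mem_filter.mpr ⟨Finset.mem_filter.mpr ⟨mem_D.mpr ⟨hm, by simp [mdeg_add, mdeg_E]⟩, ?_⟩, ⟨i, rfl⟩⟩
  rw [κm_eq hA hm (show i ∈ supp (E i + E i) by rw [supp_E_add_E]; simp)]
  exact (κ_eq A hi).symm

/-- the parent function on a component -/
lemma parent_setup (A : Finset (Fin s → ℕ)) (x₀ : Fin s) :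
    ∃ P : Fin s → Fin s, ∀ y ∈ (κ A x₀).erase x₀,
      Srel A (P y) y ∧ dst A x₀ (P y) + 1 = dst A x₀ y ∧ reach A x₀ (P y) := by
  have h : ∀ y, ∃ w, y ∈ (κ A x₀).erase x₀ →
      (Srel A w y ∧ dst A x₀ w + 1 = dst A x₀ y ∧ reach A x₀ w) := by
    intro y
    by_cases hy : y ∈ (κ A x₀).erase x₀
    · obtain ⟨hne, hk⟩ := Finset.mem_erase.mp hy
      obtain ⟨w, h1, h2, h3⟩ := exists_parent ((mem_κ A).mp hk) hne
      exact ⟨w, fun _ => ⟨h1, h2, h3⟩⟩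
    · exact ⟨x₀, fun h => absurd h hy⟩
  choose P hP using h
  exact ⟨P, fun y hy => hP y hy⟩

lemma psi_injOn {x₀ : Fin s} {P : Fin s → Fin s}
    (hP : ∀ y ∈ (κ A x₀).erase x₀,
      Srel A (P y) y ∧ dst A x₀ (P y) + 1 = dst A x₀ y ∧ reach A x₀ (P y)) :
    Set.InjOn (fun y => E (P y) + E y) ↑((κ A x₀).erase x₀) := by
  intro y1 hy1 y2 hy2 heq
  simp only at heq
  rcases pair_eq heq with ⟨_, h2⟩ | ⟨h1, h2⟩
  · exact h2
  · have d1 := (hP y1 hy1).2.1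
    have d2 := (hP y2 hy2).2.1
    rw [h1] at d1
    rw [← h2] at d2
    exfalso
    omega

lemma psi_maps (hA : IsOrderIdeal A) {x₀ : Fin s} {P : Fin s → Fin s}
    (hP : ∀ y ∈ (κ A x₀).erase x₀,
      Srel A (P y) y ∧ dst A x₀ (P y) + 1 = dst A x₀ y ∧ reach A x₀ (P y)) :
    ∀ y ∈ (κ A x₀).erase x₀, E (P y) + E y ∈ plainE A (κ A x₀) := by
  intro y hy
  obtain ⟨⟨hne, hmem⟩, _, hr⟩ := hP y hy
  exact edge_mem_plainE hA hne hmem hr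

lemma card_K_le_plainE (hA : IsOrderIdeal A) {x₀ : Fin s} {P : Fin s → Fin s}
    (hP : ∀ y ∈ (κ A x₀).erase x₀,
      Srel A (P y) y ∧ dst A x₀ (P y) + 1 = dst A x₀ y ∧ reach A x₀ (P y)) :
    (κ A x₀).card - 1 ≤ (plainE A (κ A x₀)).card := by
  have := Finset.card_le_card_of_injOn (fun y => E (P y) + E y)
    (psi_maps hA hP) (psi_injOn hP)
  rwa [Finset.card_erase_of_mem (self_mem_κ A x₀)] at this

/-- if all plain edges are parent edges, dst-values across any edge differ by one -/
lemma odd_of_parent {x₀ : Fin s} {T : Finset (Fin s → ℕ)}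
    (hT : ∀ u ∈ T, ∃ y w, u = E w + E y ∧ dst A x₀ w + 1 = dst A x₀ y)
    {i j : Fin s} (hij : E i + E j ∈ T) :
    ∃ m, dst A x₀ i + dst A x₀ j = 2 * m + 1 := by
  obtain ⟨y, w, heq, hd⟩ := hT _ hij
  rcases pair_eq heq with ⟨h1, h2⟩ | ⟨h1, h2⟩
  · rw [← h1, ← h2] at hd
    exact ⟨dst A x₀ i, by omega⟩
  · rw [← h1, ← h2] at hd
    exact ⟨dst A x₀ j, by omega⟩

lemma triangle_false {x₀ : Fin s} {T : Finset (Fin s → ℕ)}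
    (hT : ∀ u ∈ T, ∃ y w, u = E w + E y ∧ dst A x₀ w + 1 = dst A x₀ y)
    {i j k : Fin s}
    (h1 : E i + E j ∈ T) (h2 : E i + E k ∈ T) (h3 : E j + E k ∈ T) : False := by
  obtain ⟨m1, hm1⟩ := odd_of_parent hT h1
  obtain ⟨m2, hm2⟩ := odd_of_parent hT h2
  obtain ⟨m3, hm3⟩ := odd_of_parent hT h3
  omega

end Core



section ClaimA

variable {A : Finset (Fin s → ℕ)}

lemma E_le_pair {x i j : Fin s} (h : E x ≤ E i + E j) : x = i ∨ x = j := by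
  by_contra hc
  push_neg at hc
  have h1 := h x
  rw [E_apply_self, Pi.add_apply, E_apply_ne hc.1, E_apply_ne hc.2] at h1
  exact absurd h1 (by norm_num)

lemma loop_le {d : Fin s} {w : Fin s → ℕ} (h : 2 ≤ w d) : E d + E d ≤ w := by
  intro t
  by_cases ht : t = d
  · subst ht; simpa using h
  · simp [Pi.add_apply, E_apply_ne ht]

lemma step_decomp {v w : Fin s → ℕ} (h : v ≤ w) (hd : mdeg w = mdeg v + 1) :
    ∃ d, w = v + E d := by
  have hw : w = v + (fun j => w j - v j) := by
    funext j
    have h2 : v j ≤ w j := h j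
    show w j = v j + (w j - v j)
    omega
  have hm : mdeg w = mdeg v + mdeg (fun j => w j - v j) := by
    conv_lhs => rw [hw]
    rw [mdeg_add]
  obtain ⟨d, hd'⟩ := deg_one_form (show mdeg (fun j => w j - v j) = 1 by omega)
  exact ⟨d, by rw [hw, hd']⟩

lemma claimA (hA : IsOrderIdeal A) {n : ℕ} (hn : 3 ≤ n)
    (hext : ∀ u ∈ A, ∀ k, mdeg u ≤ k → k ≤ n → ∃ v ∈ A, u ≤ v ∧ mdeg v = k)
    {x₀ : Fin s} (hx₀ : E x₀ ∈ A) :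
    (κ A x₀).card ≤ (efib A (κ A x₀)).card := by
  obtain ⟨P, hP⟩ := parent_setup A x₀
  have hplain := card_K_le_plainE hA hP
  have hsplit := efib_card_split (A := A) (κ A x₀)
  by_cases hloop : (loopE A (κ A x₀)).Nonempty
  · have := Finset.card_pos.mpr hloop
    omega
  · rw [Finset.not_nonempty_iff_eq_empty] at hloop
    have hnoloop : ∀ i : Fin s, reach A x₀ i → E i + E i ∉ A := by
      intro i hr hm
      have h2 := loop_mem_loopE hA hm hr
      rw [hloop] at h2
      exact absurd h2 (Finset.notMem_empty _)
    by_contra hcon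
    push_neg at hcon
    have hple : (plainE A (κ A x₀)).card ≤ ((κ A x₀).erase x₀).card := by
      rw [Finset.card_erase_of_mem (self_mem_κ A x₀)]
      omega
    have himage : ((κ A x₀).erase x₀).image (fun y => E (P y) + E y) = plainE A (κ A x₀) := by
      apply Finset.eq_of_subset_of_card_le
      · intro u hu
        obtain ⟨y, hy, rfl⟩ := Finset.mem_image.mp hu
        exact psi_maps hA hP y hy
      · rw [Finset.card_image_of_injOn (psi_injOn hP)]
        exact hple
    have hPOdd : ∀ u ∈ plainE A (κ A x₀), ∃ y w, u = E w + E y ∧ dst A x₀ w + 1 = dst A x₀ y := by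
      intro u hu
      rw [← himage] at hu
      obtain ⟨y, hy, rfl⟩ := Finset.mem_image.mp hu
      exact ⟨y, P y, rfl, (hP y hy).2.1⟩
    obtain ⟨v, hvA, hvle, hv2⟩ := hext (E x₀) hx₀ 2 (by rw [mdeg_E]; omega) (by omega)
    obtain ⟨i, j, rfl⟩ := deg_two_form hv2
    have hedge : ∃ c, E x₀ + E c ∈ A := by
      rcases E_le_pair hvle with h | h
      · exact ⟨j, by rwa [← h] at hvA⟩
      · refine ⟨i, ?_⟩
        rw [add_comm] at hvA
        rwa [← h] at hvA
    obtain ⟨c, hcA⟩ := hedge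
    have hcx : c ≠ x₀ := by
      rintro rfl
      exact hnoloop c Relation.ReflTransGen.refl hcA
    have hreach_c : reach A x₀ c :=
      Relation.ReflTransGen.single ⟨fun h => hcx h.symm, hcA⟩
    obtain ⟨w, hwA, hwle, hw3⟩ := hext _ hcA 3 (by simp [mdeg_add, mdeg_E]) (by omega)
    obtain ⟨d, rfl⟩ := step_decomp hwle (by rw [hw3]; simp [mdeg_add, mdeg_E])
    have three_apply : ∀ t : Fin s, (E x₀ + E c + E d) t =
        (if t = x₀ then 1 else 0) + (if t = c then 1 else 0) + (if t = d then 1 else 0) := by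
      intro t; rfl
    by_cases hd1 : d = x₀
    · refine absurd (hA.2 _ hwA _ (loop_le (d := x₀) ?_)) (hnoloop x₀ Relation.ReflTransGen.refl)
      rw [three_apply x₀]
      simp [hd1, hcx]
    · by_cases hd2 : d = c
      · refine absurd (hA.2 _ hwA _ (loop_le (d := c) ?_)) (hnoloop c hreach_c)
        rw [three_apply c]
        simp [hd2, hcx]
      · -- triangle
        have e2A : E x₀ + E d ∈ A := by
          refine hA.2 _ hwA _ ?_
          intro t
          simp only [Pi.add_apply, E]
          split_ifs <;> omega
        have e3A : E c + E d ∈ A := by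
          refine hA.2 _ hwA _ ?_
          intro t
          simp only [Pi.add_apply, E]
          split_ifs <;> omega
        have e1 := edge_mem_plainE hA (fun h : (x₀:Fin s) = c => hcx h.symm) hcA Relation.ReflTransGen.refl
        have e2 := edge_mem_plainE hA (fun h : (x₀:Fin s) = d => hd1 h.symm) e2A Relation.ReflTransGen.refl
        have e3 := edge_mem_plainE hA (fun h : (c:Fin s) = d => hd2 h.symm) e3A hreach_c
        exact triangle_false hPOdd e1 e2 e3

end ClaimA



section ClaimB

variable {A : Finset (Fin s → ℕ)}

lemma mdeg_eq_sum_supp (z : Fin s → ℕ) : mdeg z = ∑ x ∈ supp z, z x := by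
  rw [mdeg]
  symm
  apply Finset.sum_subset (Finset.filter_subset _ _)
  intro x _ hx
  have : ¬ z x ≠ 0 := fun hc => hx (Finset.mem_filter.mpr ⟨Finset.mem_univ x, hc⟩)
  omega

lemma supp_card_of_sq {z : Fin s → ℕ} (hsq : ∀ x, z x ≤ 1) :
    (supp z).card = mdeg z := by
  rw [mdeg_eq_sum_supp]
  rw [Finset.card_eq_sum_ones]
  apply Finset.sum_congr rfl
  intro x hx
  have := mem_supp.mp hx
  have := hsq x
  omega

lemma eq_of_supp_eq_of_sq {z1 z2 : Fin s → ℕ} (h1 : ∀ x, z1 x ≤ 1) (h2 : ∀ x, z2 x ≤ 1)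
    (hs : supp z1 = supp z2) : z1 = z2 := by
  funext x
  have e1 := h1 x
  have e2 := h2 x
  by_cases hx : x ∈ supp z1
  · have m1 := mem_supp.mp hx
    have m2 := mem_supp.mp (hs ▸ hx)
    omega
  · have m1 : z1 x = 0 := by
      by_contra hc
      exact hx (mem_supp.mpr hc)
    have m2 : z2 x = 0 := by
      by_contra hc
      exact hx (hs ▸ mem_supp.mpr hc)
    omega

/-- basic membership facts for elements of `zfib` -/
lemma zfib_supp_reach (hA : IsOrderIdeal A) {n : ℕ} {x₀ : Fin s} {z : Fin s → ℕ}
    (hz : z ∈ zfib A n (κ A x₀)) : z ∈ A ∧ mdeg z = n ∧ ∀ x ∈ supp z, reach A x₀ x := by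
  obtain ⟨hzD, hzκ⟩ := Finset.mem_filter.mp hz
  obtain ⟨hzA, hzdeg⟩ := mem_D.mp hzD
  refine ⟨hzA, hzdeg, fun x hx => ?_⟩
  have h2 := κm_eq hA hzA hx
  have hxx : x ∈ κ A x := self_mem_κ A x
  rw [← h2, hzκ] at hxx
  exact (mem_κ A).mp hxx

lemma zfib_edge (hA : IsOrderIdeal A) {n : ℕ} {x₀ : Fin s} {z : Fin s → ℕ}
    (hz : z ∈ zfib A n (κ A x₀)) {x y : Fin s} (hx : x ∈ supp z) (hy : y ∈ supp z)
    (hxy : x ≠ y) : E x + E y ∈ plainE A (κ A x₀) := by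
  obtain ⟨hzA, _, hreach⟩ := zfib_supp_reach hA hz
  exact edge_mem_plainE hA hxy
    (hA.2 _ hzA _ (E_add_E_le hxy (mem_supp.mp hx) (mem_supp.mp hy))) (hreach x hx)

lemma zfib_loop (hA : IsOrderIdeal A) {n : ℕ} {x₀ : Fin s} {z : Fin s → ℕ}
    (hz : z ∈ zfib A n (κ A x₀)) {x : Fin s} (hx : 2 ≤ z x) :
    E x + E x ∈ loopE A (κ A x₀) := by
  obtain ⟨hzA, _, hreach⟩ := zfib_supp_reach hA hz
  exact loop_mem_loopE hA (hA.2 _ hzA _ (loop_le hx))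
    (hreach x (mem_supp.mpr (by omega)))

end ClaimB



section ClaimBMain

variable {A : Finset (Fin s → ℕ)}

lemma claimB (hA : IsOrderIdeal A) {n : ℕ} (hn : 3 ≤ n)
    {x₀ : Fin s} (hx₀ : E x₀ ∈ A)
    (hcard : (efib A (κ A x₀)).card ≤ (κ A x₀).card) :
    (zfib A n (κ A x₀)).card ≤ (κ A x₀).card := by
  obtain ⟨P, hP⟩ := parent_setup A x₀
  have hplain := card_K_le_plainE hA hP
  have hsplit := efib_card_split (A := A) (κ A x₀)
  have hKpos : 1 ≤ (κ A x₀).card := Finset.card_pos.mpr ⟨x₀, self_mem_κ A x₀⟩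
  have himcard : (((κ A x₀).erase x₀).image (fun y => E (P y) + E y)).card
      = (κ A x₀).card - 1 := by
    rw [Finset.card_image_of_injOn (psi_injOn hP),
      Finset.card_erase_of_mem (self_mem_κ A x₀)]
  have himsub : ((κ A x₀).erase x₀).image (fun y => E (P y) + E y) ⊆ plainE A (κ A x₀) := by
    intro u hu
    obtain ⟨y, hy, rfl⟩ := Finset.mem_image.mp hu
    exact psi_maps hA hP y hy
  rcases Finset.eq_empty_or_nonempty (loopE A (κ A x₀)) with hloop | hloop
  · -- Case 1 : no loops in the component
    have hsq : ∀ z ∈ zfib A n (κ A x₀), ∀ x, z x ≤ 1 := by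
      intro z hz x
      by_contra hc
      have h2 := zfib_loop hA hz (x := x) (by omega)
      rw [hloop] at h2
      exact absurd h2 (Finset.notMem_empty _)
    have hsupp3 : ∀ z ∈ zfib A n (κ A x₀), 2 < (supp z).card := by
      intro z hz
      rw [supp_card_of_sq (hsq z hz), (zfib_supp_reach hA hz).2.1]
      omega
    by_cases hpc : (plainE A (κ A x₀)).card ≤ (κ A x₀).card - 1
    · -- every plain edge is a parent edge; no top-degree monomial exists
      have himage : ((κ A x₀).erase x₀).image (fun y => E (P y) + E y) = plainE A (κ A x₀) :=
        Finset.eq_of_subset_of_card_le himsub (by omega)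
      have hPOdd : ∀ u ∈ plainE A (κ A x₀),
          ∃ y w, u = E w + E y ∧ dst A x₀ w + 1 = dst A x₀ y := by
        intro u hu
        rw [← himage] at hu
        obtain ⟨y, hy, rfl⟩ := Finset.mem_image.mp hu
        exact ⟨y, P y, rfl, (hP y hy).2.1⟩
      have hempty : zfib A n (κ A x₀) = ∅ := by
        rw [Finset.eq_empty_iff_forall_notMem]
        intro z hz
        obtain ⟨i, j, k, hi, hj, hk, hij, hik, hjk⟩ :=
          Finset.two_lt_card_iff.mp (hsupp3 z hz)
        exact triangle_false hPOdd (zfib_edge hA hz hi hj hij)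
          (zfib_edge hA hz hi hk hik) (zfib_edge hA hz hj hk hjk)
      rw [hempty]
      simp
    · push_neg at hpc
      have hploop : (loopE A (κ A x₀)).card = 0 := by rw [hloop]; simp
      have hsd : ((plainE A (κ A x₀)) \ (((κ A x₀).erase x₀).image (fun y => E (P y) + E y))).card = 1 := by
        rw [Finset.card_sdiff_of_subset himsub, himcard]
        omega
      obtain ⟨f, hf⟩ := Finset.card_eq_one.mp hsd
      have hfmem : f ∈ plainE A (κ A x₀) := by
        have h2 : f ∈ (plainE A (κ A x₀)) \ (((κ A x₀).erase x₀).image (fun y => E (P y) + E y)) :=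
          hf ▸ Finset.mem_singleton_self f
        exact (Finset.mem_sdiff.mp h2).1
      have hPOdd : ∀ u ∈ (plainE A (κ A x₀)).erase f,
          ∃ y w, u = E w + E y ∧ dst A x₀ w + 1 = dst A x₀ y := by
        intro u hu
        obtain ⟨hne, hu⟩ := Finset.mem_erase.mp hu
        have h2 : u ∈ ((κ A x₀).erase x₀).image (fun y => E (P y) + E y) := by
          by_contra hc
          have h3 := Finset.mem_sdiff.mpr ⟨hu, hc⟩
          rw [hf] at h3
          exact hne (Finset.mem_singleton.mp h3)
        obtain ⟨y, hy, rfl⟩ := Finset.mem_image.mp h2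
        exact ⟨y, P y, rfl, (hP y hy).2.1⟩
      obtain ⟨p, q, hfpq⟩ :=
        deg_two_form (mem_D.mp (Finset.mem_filter.mp (Finset.mem_filter.mp hfmem).1).1).2
      have hpq : p ≠ q := by
        rintro rfl
        exact (Finset.mem_filter.mp hfmem).2 ⟨p, hfpq⟩
      have hkey : ∀ z ∈ zfib A n (κ A x₀), ∀ i j k : Fin s,
          i ∈ supp z → j ∈ supp z → k ∈ supp z → i ≠ j → i ≠ k → j ≠ k →
          (p = i ∨ p = j ∨ p = k) ∧ (q = i ∨ q = j ∨ q = k) := by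
        intro z hz i j k hi hj hk hij hik hjk
        have e1 := zfib_edge hA hz hi hj hij
        have e2 := zfib_edge hA hz hi hk hik
        have e3 := zfib_edge hA hz hj hk hjk
        have hor : E i + E j = f ∨ E i + E k = f ∨ E j + E k = f := by
          by_contra hc
          push_neg at hc
          exact triangle_false hPOdd
            (Finset.mem_erase.mpr ⟨hc.1, e1⟩)
            (Finset.mem_erase.mpr ⟨hc.2.1, e2⟩)
            (Finset.mem_erase.mpr ⟨hc.2.2, e3⟩)
        rw [hfpq] at hor
        rcases hor with h | h | h <;> rcases pair_eq h with ⟨h1, h2⟩ | ⟨h1, h2⟩ <;>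
          exact ⟨by tauto, by tauto⟩
      have hstruct : ∀ z ∈ zfib A n (κ A x₀), p ∈ supp z ∧ q ∈ supp z := by
        intro z hz
        obtain ⟨i, j, k, hi, hj, hk, hij, hik, hjk⟩ :=
          Finset.two_lt_card_iff.mp (hsupp3 z hz)
        obtain ⟨hp', hq'⟩ := hkey z hz i j k hi hj hk hij hik hjk
        constructor
        · rcases hp' with h | h | h <;> rw [h] <;> assumption
        · rcases hq' with h | h | h <;> rw [h] <;> assumption
      rcases Nat.lt_or_ge n 4 with hn4 | hn4
      · -- n = 3 : map each top monomial to its third variable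
        have hn3 : n = 3 := by omega
        apply Finset.card_le_card_of_injOn
          (fun z => if h : (((supp z).erase p).erase q).Nonempty
            then (((supp z).erase p).erase q).min' h else x₀)
        · intro z hz
          obtain ⟨hpz, hqz⟩ := hstruct z hz
          have hqz' : q ∈ (supp z).erase p := Finset.mem_erase.mpr ⟨hpq.symm, hqz⟩
          have hTcard : (((supp z).erase p).erase q).card = 1 := by
            rw [Finset.card_erase_of_mem hqz', Finset.card_erase_of_mem hpz,
              supp_card_of_sq (hsq z hz), (zfib_supp_reach hA hz).2.1, hn3]
          obtain ⟨t, ht⟩ := Finset.card_eq_one.mp hTcard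
          have htmem : t ∈ ((supp z).erase p).erase q := ht ▸ Finset.mem_singleton_self t
          have htz : t ∈ supp z :=
            Finset.mem_of_mem_erase (Finset.mem_of_mem_erase htmem)
          simp only [ht, Finset.singleton_nonempty, dif_pos, Finset.min'_singleton]
          exact (mem_κ A).mpr ((zfib_supp_reach hA hz).2.2 t htz)
        · intro z1 hz1 z2 hz2 heq
          simp only at heq
          obtain ⟨hpz1, hqz1⟩ := hstruct z1 hz1
          obtain ⟨hpz2, hqz2⟩ := hstruct z2 hz2
          have hget : ∀ z, z ∈ zfib A n (κ A x₀) → p ∈ supp z → q ∈ supp z →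
              ∃ t, (((supp z).erase p).erase q) = {t} ∧
                supp z = insert p (insert q {t}) := by
            intro z hz hpz hqz
            have hqz' : q ∈ (supp z).erase p := Finset.mem_erase.mpr ⟨hpq.symm, hqz⟩
            have hTcard : (((supp z).erase p).erase q).card = 1 := by
              rw [Finset.card_erase_of_mem hqz', Finset.card_erase_of_mem hpz,
                supp_card_of_sq (hsq z hz), (zfib_supp_reach hA hz).2.1, hn3]
            obtain ⟨t, ht⟩ := Finset.card_eq_one.mp hTcard
            refine ⟨t, ht, ?_⟩
            rw [← ht, Finset.insert_erase hqz', Finset.insert_erase hpz]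
          obtain ⟨t1, ht1, hs1⟩ := hget z1 hz1 hpz1 hqz1
          obtain ⟨t2, ht2, hs2⟩ := hget z2 hz2 hpz2 hqz2
          rw [ht1, ht2] at heq
          simp only [Finset.singleton_nonempty, dif_pos, Finset.min'_singleton] at heq
          apply eq_of_supp_eq_of_sq (hsq z1 hz1) (hsq z2 hz2)
          rw [hs1, hs2, heq]
      · -- n ≥ 4 : impossible
        have hempty : zfib A n (κ A x₀) = ∅ := by
          rw [Finset.eq_empty_iff_forall_notMem]
          intro z hz
          obtain ⟨hpz, _⟩ := hstruct z hz
          have hec : 2 < ((supp z).erase p).card := by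
            rw [Finset.card_erase_of_mem hpz, supp_card_of_sq (hsq z hz),
              (zfib_supp_reach hA hz).2.1]
            omega
          obtain ⟨i, j, k, hi, hj, hk, hij, hik, hjk⟩ := Finset.two_lt_card_iff.mp hec
          obtain ⟨hp', _⟩ := hkey z hz i j k (Finset.mem_of_mem_erase hi)
            (Finset.mem_of_mem_erase hj) (Finset.mem_of_mem_erase hk) hij hik hjk
          rcases hp' with h | h | h
          · exact (Finset.mem_erase.mp hi).1 h.symm
          · exact (Finset.mem_erase.mp hj).1 h.symm
          · exact (Finset.mem_erase.mp hk).1 h.symm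
        rw [hempty]
        simp
  · -- Case 2 : a loop exists in the component
    have hlpos : 1 ≤ (loopE A (κ A x₀)).card := Finset.card_pos.mpr hloop
    have hlcard : (loopE A (κ A x₀)).card = 1 := by omega
    obtain ⟨l0, hl0⟩ := Finset.card_eq_one.mp hlcard
    have hl0mem : l0 ∈ loopE A (κ A x₀) := hl0 ▸ Finset.mem_singleton_self l0
    obtain ⟨xh, hxh⟩ := (Finset.mem_filter.mp hl0mem).2
    have hxhK : reach A x₀ xh := by
      have hef : l0 ∈ efib A (κ A x₀) := (Finset.mem_filter.mp hl0mem).1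
      have hA2 : l0 ∈ A := (mem_D.mp (Finset.mem_filter.mp hef).1).1
      have hκ2 : κm A l0 = κ A x₀ := (Finset.mem_filter.mp hef).2
      have hxs : xh ∈ supp l0 := by
        rw [hxh, supp_E_add_E]
        simp
      have h3 := κm_eq hA hA2 hxs
      have hx : xh ∈ κ A xh := self_mem_κ A xh
      rw [h3.symm.trans hκ2] at hx
      exact (mem_κ A).mp hx
    have huniq : ∀ x : Fin s, E x + E x ∈ loopE A (κ A x₀) → x = xh := by
      intro x hx
      rw [hl0, Finset.mem_singleton, hxh] at hx
      rcases pair_eq hx with ⟨h1, _⟩ | ⟨h1, _⟩ <;> exact h1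
    have himage : ((κ A x₀).erase x₀).image (fun y => E (P y) + E y) = plainE A (κ A x₀) :=
      Finset.eq_of_subset_of_card_le himsub (by omega)
    have hPOdd : ∀ u ∈ plainE A (κ A x₀),
        ∃ y w, u = E w + E y ∧ dst A x₀ w + 1 = dst A x₀ y := by
      intro u hu
      rw [← himage] at hu
      obtain ⟨y, hy, rfl⟩ := Finset.mem_image.mp hu
      exact ⟨y, P y, rfl, (hP y hy).2.1⟩
    have hsupp2 : ∀ z ∈ zfib A n (κ A x₀), (supp z).card ≤ 2 := by
      intro z hz
      by_contra hc
      push_neg at hc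
      obtain ⟨i, j, k, hi, hj, hk, hij, hik, hjk⟩ := Finset.two_lt_card_iff.mp hc
      exact triangle_false hPOdd (zfib_edge hA hz hi hj hij)
        (zfib_edge hA hz hi hk hik) (zfib_edge hA hz hj hk hjk)
    have hexp : ∀ z ∈ zfib A n (κ A x₀), ∀ x, 2 ≤ z x → x = xh :=
      fun z hz x hx => huniq x (zfib_loop hA hz hx)
    have hshape : ∀ z ∈ zfib A n (κ A x₀), ∃ c : Fin s,
        (if h : ((supp z).erase xh).Nonempty then ((supp z).erase xh).min' h else xh) = c ∧
        ((c = xh ∧ z = (fun t => if t = xh then n else 0)) ∨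
         (c ≠ xh ∧ reach A x₀ c ∧
           z = (fun t => if t = xh then n - 1 else if t = c then 1 else 0))) := by
      intro z hz
      obtain ⟨hzA, hdeg, hreach⟩ := zfib_supp_reach hA hz
      have hspos : (supp z).Nonempty := supp_nonempty (by omega)
      have hbig : ∃ x, 2 ≤ z x := by
        by_contra hc
        push_neg at hc
        have h4 := supp_card_of_sq (z := z) (fun x => by have := hc x; omega)
        have h5 := hsupp2 z hz
        omega
      obtain ⟨xb, hxb⟩ := hbig
      have hxbh := hexp z hz xb hxb
      rw [hxbh] at hxb
      have hxhsupp : xh ∈ supp z := mem_supp.mpr (by omega)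
      rcases Nat.lt_or_ge (supp z).card 2 with h2 | h2
      · -- one variable
        have h1 : (supp z).card = 1 := by
          have := Finset.card_pos.mpr hspos
          omega
        obtain ⟨t, ht⟩ := Finset.card_eq_one.mp h1
        have hxt : xh = t := by
          have := hxhsupp
          rw [ht, Finset.mem_singleton] at this
          exact this
        rw [← hxt] at ht
        have hzxh : z xh = n := by
          have hsum : mdeg z = z xh := by
            rw [mdeg_eq_sum_supp, ht, Finset.sum_singleton]
          omega
        refine ⟨xh, ?_, Or.inl ⟨rfl, ?_⟩⟩
        · rw [ht, Finset.erase_singleton]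
          simp
        · funext t'
          by_cases ht' : t' = xh
          · rw [ht', if_pos rfl, hzxh]
          · rw [if_neg ht']
            by_contra hc
            have : t' ∈ supp z := mem_supp.mpr hc
            rw [ht, Finset.mem_singleton] at this
            exact ht' this
      · -- two variables
        have h2' : (supp z).card = 2 := le_antisymm (hsupp2 z hz) h2
        obtain ⟨u, v, huv, hsuppz⟩ := Finset.card_eq_two.mp h2'
        have hxhuv : xh = u ∨ xh = v := by
          have := hxhsupp
          rw [hsuppz] at this
          simpa using this
        obtain ⟨y, hyne, hsupp2'⟩ : ∃ y, y ≠ xh ∧ supp z = {xh, y} := by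
          rcases hxhuv with rfl | rfl
          · exact ⟨v, fun h => huv h.symm, hsuppz⟩
          · refine ⟨u, fun h => huv h, by rw [hsuppz, Finset.pair_comm]⟩
        have hyz : y ∈ supp z := by
          rw [hsupp2']
          simp
        have hzy : z y = 1 := by
          have h1 := mem_supp.mp hyz
          by_cases h5 : 2 ≤ z y
          · exact absurd (hexp z hz y h5) hyne
          · omega
        have hzxh : z xh = n - 1 := by
          have hsum : mdeg z = z xh + z y := by
            rw [mdeg_eq_sum_supp, hsupp2', Finset.sum_pair (fun h => hyne h.symm)]
          omega
        have herase : (supp z).erase xh = {y} := by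
          rw [hsupp2']
          ext t
          constructor
          · intro ht
            obtain ⟨htne, htm⟩ := Finset.mem_erase.mp ht
            rcases Finset.mem_insert.mp htm with h | h
            · exact absurd h htne
            · exact h
          · intro ht
            rw [Finset.mem_singleton] at ht
            subst ht
            exact Finset.mem_erase.mpr ⟨hyne, by simp⟩
        refine ⟨y, ?_, Or.inr ⟨hyne, hreach y hyz, ?_⟩⟩
        · rw [herase]
          simp
        · funext t
          by_cases h5 : t = xh
          · rw [if_pos h5, h5, hzxh]
          · rw [if_neg h5]
            by_cases h6 : t = y
            · rw [if_pos h6, h6, hzy]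
            · rw [if_neg h6]
              by_contra hc
              have h7 : t ∈ supp z := mem_supp.mpr hc
              rw [hsupp2'] at h7
              rcases Finset.mem_insert.mp h7 with h | h
              · exact h5 h
              · exact h6 (Finset.mem_singleton.mp h)
    apply Finset.card_le_card_of_injOn
      (fun z => if h : ((supp z).erase xh).Nonempty then ((supp z).erase xh).min' h else xh)
    · intro z hz
      obtain ⟨c, hcval, hcase⟩ := hshape z hz
      beta_reduce
      rw [hcval]
      rcases hcase with ⟨rfl, _⟩ | ⟨_, hrc, _⟩
      · exact (mem_κ A).mpr hxhK
      · exact (mem_κ A).mpr hrc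
    · intro z1 hz1 z2 hz2 heq
      simp only at heq
      obtain ⟨c1, hv1, hc1⟩ := hshape z1 hz1
      obtain ⟨c2, hv2, hc2⟩ := hshape z2 hz2
      rw [hv1, hv2] at heq
      subst heq
      rcases hc1 with ⟨he1, hf1⟩ | ⟨he1, _, hf1⟩ <;> rcases hc2 with ⟨he2, hf2⟩ | ⟨he2, _, hf2⟩
      · rw [hf1, hf2]
      · exact absurd he1 he2
      · exact absurd he2 he1
      · rw [hf1, hf2]

end ClaimBMain



section Global

variable {A : Finset (Fin s → ℕ)}

lemma reach_E_mem (hA : IsOrderIdeal A) {x y : Fin s} (hx : E x ∈ A)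
    (h : reach A x y) : E y ∈ A := by
  induction h with
  | refl => exact hx
  | tail h1 hstep ih =>
    exact hA.2 _ hstep.2 _ le_add_self

lemma D_one_eq (A : Finset (Fin s → ℕ)) :
    D A 1 = (Finset.univ.filter (fun i : Fin s => E i ∈ A)).image E := by
  ext u
  constructor
  · intro hu
    obtain ⟨huA, hdeg⟩ := mem_D.mp hu
    obtain ⟨i, rfl⟩ := deg_one_form hdeg
    exact Finset.mem_image_of_mem E (Finset.mem_filter.mpr ⟨Finset.mem_univ i, huA⟩)
  · intro hu
    obtain ⟨i, hi, rfl⟩ := Finset.mem_image.mp hu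
    exact mem_D.mpr ⟨(Finset.mem_filter.mp hi).2, mdeg_E i⟩

lemma global_count (hA : IsOrderIdeal A) {n : ℕ} (hn : 3 ≤ n)
    (hext : ∀ u ∈ A, ∀ k, mdeg u ≤ k → k ≤ n → ∃ v ∈ A, u ≤ v ∧ mdeg v = k)
    (h12 : (D A 2).card = (D A 1).card) :
    (D A n).card ≤ (D A 1).card := by
  classical
  set V : Finset (Fin s) := Finset.univ.filter (fun i => E i ∈ A) with hV
  have hVcard : (D A 1).card = V.card := by
    rw [D_one_eq A, Finset.card_image_of_injective _ (fun a b h => E_inj h)]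
  set t : Finset (Finset (Fin s)) := V.image (κ A) with ht
  have hmemV : ∀ {x : Fin s}, x ∈ V → E x ∈ A := fun hx => (Finset.mem_filter.mp hx).2
  -- κm maps positive-degree monomials of A into t
  have hκm_mem : ∀ {k : ℕ}, k ≠ 0 → ∀ u ∈ D A k, κm A u ∈ t := by
    intro k hk u hu
    obtain ⟨huA, hdeg⟩ := mem_D.mp hu
    obtain ⟨x, hx⟩ := supp_nonempty (u := u) (by omega)
    have hxV : x ∈ V := by
      rw [hV]
      refine Finset.mem_filter.mpr ⟨Finset.mem_univ x, ?_⟩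
      apply hA.2 u huA
      rw [E_le_iff]
      have := mem_supp.mp hx
      omega
    rw [κm_eq hA huA hx]
    exact Finset.mem_image_of_mem _ hxV
  have hVfib : V.card = ∑ K ∈ t, (V.filter (fun x => κ A x = K)).card :=
    Finset.card_eq_sum_card_fiberwise (fun x hx => Finset.mem_image_of_mem _ hx)
  have hD2fib : (D A 2).card = ∑ K ∈ t, (efib A K).card :=
    Finset.card_eq_sum_card_fiberwise (fun u hu => hκm_mem (by omega) u hu)
  have hDnfib : (D A n).card = ∑ K ∈ t, (zfib A n K).card :=
    Finset.card_eq_sum_card_fiberwise (fun u hu => hκm_mem (by omega) u hu)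
  have hvfib : ∀ K ∈ t, V.filter (fun x => κ A x = K) = K := by
    intro K hK
    obtain ⟨x₀, hx₀V, rfl⟩ := Finset.mem_image.mp hK
    ext y
    constructor
    · intro hy
      obtain ⟨hyV, hyκ⟩ := Finset.mem_filter.mp hy
      rw [← hyκ]
      exact self_mem_κ A y
    · intro hy
      have hr : reach A x₀ y := (mem_κ A).mp hy
      refine Finset.mem_filter.mpr ⟨?_, (κ_eq A hr).symm⟩
      rw [hV]
      exact Finset.mem_filter.mpr ⟨Finset.mem_univ y, reach_E_mem hA (hmemV hx₀V) hr⟩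
  have hVt : V.card = ∑ K ∈ t, K.card := by
    rw [hVfib]
    exact Finset.sum_congr rfl (fun K hK => by rw [hvfib K hK])
  have hgeq : ∀ K ∈ t, K.card ≤ (efib A K).card := by
    intro K hK
    obtain ⟨x₀, hx₀V, rfl⟩ := Finset.mem_image.mp hK
    exact claimA hA hn hext (hmemV hx₀V)
  have hsumeq : ∑ K ∈ t, K.card = ∑ K ∈ t, (efib A K).card := by
    rw [← hVt, ← hD2fib, h12, hVcard]
  have heqK : ∀ K ∈ t, K.card = (efib A K).card :=
    (Finset.sum_eq_sum_iff_of_le hgeq).mp hsumeq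
  have hzle : ∀ K ∈ t, (zfib A n K).card ≤ K.card := by
    intro K hK
    obtain ⟨x₀, hx₀V, rfl⟩ := Finset.mem_image.mp hK
    exact claimB hA hn (hmemV hx₀V) (le_of_eq (heqK _ hK).symm)
  calc (D A n).card = ∑ K ∈ t, (zfib A n K).card := hDnfib
    _ ≤ ∑ K ∈ t, K.card := Finset.sum_le_sum hzle
    _ = V.card := hVt.symm
    _ = (D A 1).card := hVcard.symm

end Global



lemma hVec_eq_D (A : Finset (Fin s → ℕ)) (i : ℕ) : hVec A i = (D A i).card := rfl

end Stmt11

section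
open Stmt11 Finset

/-- For `n ≥ 3`, if `(1, a, a, ..., a, b)` of length `n+1` is a pure O-sequence,
then `b ≤ a ≤ (b+1)(n+1)`. -/
theorem stmt_11 (n a b : ℕ) (hn : 3 ≤ n) (ha : 0 < a) (hb : 0 < b)
    (h : IsPureOSequence (1 :: (List.replicate (n - 1) a ++ [b]))) :
    b ≤ a ∧ a ≤ (b + 1) * (n + 1) := by
  obtain ⟨m, rfl⟩ : ∃ m, n = m + 1 := ⟨n - 1, by omega⟩
  obtain ⟨s, A, hA, hpure, hl⟩ := h
  simp only [Nat.add_sub_cancel] at hl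
  have hm : 2 ≤ m := by omega
  have hlen : topDegree A + 1 = m + 2 := by
    have h2 := congrArg List.length hl
    simp only [hVector, List.length_map, List.length_range, List.length_cons,
      List.length_append, List.length_replicate, List.length_singleton, List.length_nil] at h2
    omega
  have htop : topDegree A = m + 1 := by omega
  have hgetD : ∀ i, i < m + 2 →
      hVec A i = (1 :: (List.replicate m a ++ [b])).getD i 0 := by
    intro i hi
    rw [← hl, hVector, htop, List.getD_eq_getElem _ _ (by simp; omega)]
    simp
  have h1 : hVec A 1 = a := by
    rw [hgetD 1 (by omega), List.getD_cons_succ, List.getD_append _ _ _ _ (by simp; omega),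
      List.getD_eq_getElem _ _ (by simp; omega), List.getElem_replicate]
  have h2 : hVec A 2 = a := by
    rw [hgetD 2 (by omega), List.getD_cons_succ, List.getD_append _ _ _ _ (by simp; omega),
      List.getD_eq_getElem _ _ (by simp; omega), List.getElem_replicate]
  have hbn : hVec A (m + 1) = b := by
    rw [hgetD (m + 1) (by omega), List.getD_cons_succ,
      List.getD_append_right _ _ _ _ (by simp)]
    simp
  -- every maximal monomial has degree m + 1
  have hDn : (D A (m + 1)).card = b := by rw [← hVec_eq_D, hbn]
  obtain ⟨w, hw⟩ : (D A (m + 1)).Nonempty := Finset.card_pos.mp (by omega)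
  obtain ⟨hwA, hwdeg⟩ := mem_D.mp hw
  obtain ⟨m₀, hm₀max, hwm₀⟩ := exists_maximal_above hA hwA
  have hm₀deg : mdeg m₀ = m + 1 := by
    have hle1 : mdeg m₀ ≤ m + 1 := htop ▸ Finset.le_sup hm₀max.1
    have hle2 : m + 1 ≤ mdeg m₀ := hwdeg ▸ mdeg_mono hwm₀
    omega
  have hext : ∀ u ∈ A, ∀ k, mdeg u ≤ k → k ≤ m + 1 → ∃ v ∈ A, u ≤ v ∧ mdeg v = k := by
    intro u hu k hk1 hk2
    obtain ⟨mm, hmm, humm⟩ := exists_maximal_above hA hu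
    have hmdeg : mdeg mm = m + 1 := (hpure mm m₀ hmm hm₀max).trans hm₀deg
    obtain ⟨v, huv, hvm, hdv⟩ := exists_interp humm (k - mdeg u) (by omega)
    exact ⟨v, hA.2 mm hmm.1 v hvm, huv, by omega⟩
  -- lower bound
  have hba : b ≤ a := by
    have hg := global_count hA (by omega) hext
      (by rw [← hVec_eq_D, ← hVec_eq_D, h1, h2])
    rw [← hVec_eq_D, ← hVec_eq_D, hbn, h1] at hg
    exact hg
  refine ⟨hba, ?_⟩
  -- upper bound
  have hsub : (Finset.univ.filter (fun i : Fin s => E i ∈ A)) ⊆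
      (D A (m + 1)).biUnion (fun w => supp w) := by
    intro x hx
    obtain ⟨v, hvA, hvle, hvdeg⟩ := hext (E x) ((Finset.mem_filter.mp hx).2) (m + 1)
      (by rw [mdeg_E]; omega) le_rfl
    refine Finset.mem_biUnion.mpr ⟨v, mem_D.mpr ⟨hvA, hvdeg⟩, mem_supp.mpr ?_⟩
    have := E_le_iff.mp hvle
    omega
  have hacard : a = (Finset.univ.filter (fun i : Fin s => E i ∈ A)).card := by
    have hd1 : (D A 1).card = a := by rw [← hVec_eq_D, h1]
    rw [← hd1, D_one_eq A, Finset.card_image_of_injective _ (fun x y hxy => E_inj hxy)]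
  have hbound : a ≤ b * (m + 1) := by
    rw [hacard]
    calc (Finset.univ.filter (fun i : Fin s => E i ∈ A)).card
        ≤ ((D A (m + 1)).biUnion (fun w => supp w)).card := Finset.card_le_card hsub
      _ ≤ ∑ w ∈ D A (m + 1), (supp w).card := Finset.card_biUnion_le
      _ ≤ ∑ w ∈ D A (m + 1), (m + 1) := Finset.sum_le_sum (fun w hw => by
          rw [← (mem_D.mp hw).2]
          exact card_supp_le_mdeg w)
      _ = (D A (m + 1)).card * (m + 1) := by rw [Finset.sum_const, smul_eq_mul]
      _ = b * (m + 1) := by rw [hDn]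
  calc a ≤ b * (m + 1) := hbound
    _ ≤ (b + 1) * (m + 1 + 1) := Nat.mul_le_mul (Nat.le_succ b) (Nat.le_succ (m + 1))

end
end
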